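/- arXiv:2001.07850 — 4 statements merged into one kernel-verified Lean document; each statement's English description precedes it below -/
import Mathlib

section
/- For all integers n, m ≥ 2, γ_{2t}(K_n □ K_m) + 1 ≤ γ_{2t}(K_{n+1} □ K_{m+1}) ≤ γ_{2t}(K_n □ K_m) + 2. -/
open SimpleGraph

/-- `S` is a total 2-dominating set of `G`: every vertex has at least 2 neighbors in `S`. -/
def TotalTwoDom {V : Type*} (G : SimpleGraph V) (S : Set V) : Prop :=
  ∀ v : V, 2 ≤ (S ∩ {u | G.Adj v u}).ncard

/-- The total 2-domination number of `G`. -/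
noncomputable def gamma2t {V : Type*} [Fintype V] (G : SimpleGraph V) : ℕ :=
  sInf {k | ∃ S : Set V, TotalTwoDom G S ∧ S.ncard = k}

/-- The complete graph on `n` vertices. -/
def K (n : ℕ) : SimpleGraph (Fin n) := ⊤
namespace RookAux

open scoped Classical

variable {a b : ℕ}

noncomputable def rc (S : Set (Fin a × Fin b)) (i : Fin a) : ℕ := (S ∩ {p | p.1 = i}).ncard
noncomputable def cc (S : Set (Fin a × Fin b)) (j : Fin b) : ℕ := (S ∩ {p | p.2 = j}).ncard

lemma adj_iff {u v : Fin a × Fin b} :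
    (K a □ K b).Adj u v ↔ (u.1 = v.1 ∧ u.2 ≠ v.2) ∨ (u.2 = v.2 ∧ u.1 ≠ v.1) := by
  simp only [K, boxProd_adj, top_adj]
  tauto

lemma deg_formula (S : Set (Fin a × Fin b)) (v : Fin a × Fin b) :
    (S ∩ {u | (K a □ K b).Adj v u}).ncard + (if v ∈ S then 2 else 0)
      = rc S v.1 + cc S v.2 := by
  have hset : S ∩ {u | (K a □ K b).Adj v u}
      = ((S ∩ {p | p.1 = v.1}) ∪ (S ∩ {p | p.2 = v.2})) \ {v} := by
    ext p
    simp only [Set.mem_inter_iff, Set.mem_setOf_eq, Set.mem_diff, Set.mem_union,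
      Set.mem_singleton_iff, adj_iff, Prod.ext_iff]
    constructor
    · rintro ⟨hS, ⟨h1, h2⟩ | ⟨h1, h2⟩⟩
      · exact ⟨Or.inl ⟨hS, h1.symm⟩, fun ⟨e1, e2⟩ => h2 e2.symm⟩
      · exact ⟨Or.inr ⟨hS, h1.symm⟩, fun ⟨e1, e2⟩ => h2 e1.symm⟩
    · rintro ⟨⟨hS, h1⟩ | ⟨hS, h1⟩, hne⟩
      · exact ⟨hS, Or.inl ⟨h1.symm, fun e => hne ⟨h1, e.symm⟩⟩⟩
      · exact ⟨hS, Or.inr ⟨h1.symm, fun e => hne ⟨e.symm, h1⟩⟩⟩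
  have hAB : (S ∩ {p | p.1 = v.1}) ∩ (S ∩ {p | p.2 = v.2}) = S ∩ {v} := by
    ext p
    simp only [Set.mem_inter_iff, Set.mem_setOf_eq, Set.mem_singleton_iff, Prod.ext_iff]
    tauto
  have hunion := Set.ncard_union_add_ncard_inter (S ∩ {p | p.1 = v.1})
    (S ∩ {p | p.2 = v.2}) (Set.toFinite _) (Set.toFinite _)
  rw [hAB] at hunion
  by_cases hv : v ∈ S
  · have h1 : (S ∩ {v}) = {v} := Set.inter_eq_right.2 (by simpa using hv)
    rw [h1, Set.ncard_singleton] at hunion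
    have hvmem : v ∈ (S ∩ {p | p.1 = v.1}) ∪ (S ∩ {p | p.2 = v.2}) :=
      Or.inl ⟨hv, rfl⟩
    have hd := Set.ncard_diff_singleton_of_mem hvmem
    have hpos : 0 < ((S ∩ {p | p.1 = v.1}) ∪ (S ∩ {p | p.2 = v.2})).ncard :=
      (Set.ncard_pos (Set.toFinite _)).2 ⟨v, hvmem⟩
    rw [hset, hd]
    simp only [hv, if_true]
    unfold rc cc
    omega
  · have h1 : (S ∩ {v}) = ∅ := by
      ext p; simp only [Set.mem_inter_iff, Set.mem_singleton_iff, Set.mem_empty_iff_false,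
        iff_false, not_and]
      rintro hS rfl; exact hv hS
    rw [h1, Set.ncard_empty] at hunion
    have hvnot : v ∉ (S ∩ {p | p.1 = v.1}) ∪ (S ∩ {p | p.2 = v.2}) := by
      rintro (⟨hS, _⟩ | ⟨hS, _⟩) <;> exact hv hS
    rw [hset, Set.diff_singleton_eq_self hvnot]
    simp only [hv, if_false]
    unfold rc cc
    omega

lemma tdom_iff (S : Set (Fin a × Fin b)) :
    TotalTwoDom (K a □ K b) S ↔
      ∀ v, 2 + (if v ∈ S then 2 else 0) ≤ rc S v.1 + cc S v.2 := by
  constructor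
  · intro h v
    have h1 := deg_formula S v
    have h2 := h v
    split_ifs at h1 ⊢ <;> omega
  · intro h v
    have h1 := deg_formula S v
    have h2 := h v
    split_ifs at h1 h2 <;> omega

lemma ncard_eq_sum_rc (S : Set (Fin a × Fin b)) : S.ncard = ∑ i, rc S i := by
  have hS : S.Finite := Set.toFinite _
  rw [Set.ncard_eq_toFinset_card _ hS]
  rw [Finset.card_eq_sum_card_fiberwise (f := Prod.fst) (t := Finset.univ)
    (fun x _ => Finset.mem_univ _)]
  refine Finset.sum_congr rfl fun i _ => ?_
  unfold rc
  rw [Set.ncard_eq_toFinset_card _ (Set.toFinite _)]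
  congr 1
  ext p
  simp only [Set.Finite.mem_toFinset, Finset.mem_filter]
  exact Iff.rfl

lemma ncard_eq_sum_cc (S : Set (Fin a × Fin b)) : S.ncard = ∑ j, cc S j := by
  have hS : S.Finite := Set.toFinite _
  rw [Set.ncard_eq_toFinset_card _ hS]
  rw [Finset.card_eq_sum_card_fiberwise (f := Prod.snd) (t := Finset.univ)
    (fun x _ => Finset.mem_univ _)]
  refine Finset.sum_congr rfl fun j _ => ?_
  unfold cc
  rw [Set.ncard_eq_toFinset_card _ (Set.toFinite _)]
  congr 1
  ext p
  simp only [Set.Finite.mem_toFinset, Finset.mem_filter]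
  exact Iff.rfl

lemma two_le_ncard {α : Type*} [Finite α] {s : Set α} {x y : α}
    (hx : x ∈ s) (hy : y ∈ s) (hxy : x ≠ y) : 2 ≤ s.ncard := by
  have h := (Set.one_lt_ncard_iff (Set.toFinite s)).2 ⟨x, y, hx, hy, hxy⟩
  omega

lemma rc_mono {S T : Set (Fin a × Fin b)} (h : S ⊆ T) (i : Fin a) : rc S i ≤ rc T i :=
  Set.ncard_le_ncard (Set.inter_subset_inter_left _ h) (Set.toFinite _)

lemma cc_mono {S T : Set (Fin a × Fin b)} (h : S ⊆ T) (j : Fin b) : cc S j ≤ cc T j :=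
  Set.ncard_le_ncard (Set.inter_subset_inter_left _ h) (Set.toFinite _)

lemma exists_of_rc_pos {S : Set (Fin a × Fin b)} {i : Fin a} (h : 1 ≤ rc S i) :
    ∃ p, p ∈ S ∧ p.1 = i := by
  unfold rc at h
  obtain ⟨p, hp⟩ := Set.nonempty_of_ncard_ne_zero (by omega : (S ∩ {p | p.1 = i}).ncard ≠ 0)
  exact ⟨p, hp.1, hp.2⟩

lemma exists_of_cc_pos {S : Set (Fin a × Fin b)} {j : Fin b} (h : 1 ≤ cc S j) :
    ∃ p, p ∈ S ∧ p.2 = j := by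
  unfold cc at h
  obtain ⟨p, hp⟩ := Set.nonempty_of_ncard_ne_zero (by omega : (S ∩ {p | p.2 = j}).ncard ≠ 0)
  exact ⟨p, hp.1, hp.2⟩

lemma rc_pos_of_mem {S : Set (Fin a × Fin b)} {p : Fin a × Fin b} (h : p ∈ S) :
    1 ≤ rc S p.1 := by
  have : (S ∩ {q | q.1 = p.1}).Nonempty := ⟨p, h, rfl⟩
  have := (Set.ncard_pos (Set.toFinite _)).2 this
  unfold rc; omega

lemma cc_pos_of_mem {S : Set (Fin a × Fin b)} {p : Fin a × Fin b} (h : p ∈ S) :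
    1 ≤ cc S p.2 := by
  have : (S ∩ {q | q.2 = p.2}).Nonempty := ⟨p, h, rfl⟩
  have := (Set.ncard_pos (Set.toFinite _)).2 this
  unfold cc; omega

lemma sum_le_of_all_rc {S : Set (Fin a × Fin b)} {d : ℕ} (h : ∀ i, d ≤ rc S i) :
    a * d ≤ S.ncard := by
  rw [ncard_eq_sum_rc]
  calc a * d = ∑ _i : Fin a, d := by simp [Finset.sum_const, Finset.card_univ, Nat.mul_comm]
  _ ≤ ∑ i, rc S i := Finset.sum_le_sum fun i _ => h i

lemma sum_le_of_all_cc {S : Set (Fin a × Fin b)} {d : ℕ} (h : ∀ j, d ≤ cc S j) :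
    b * d ≤ S.ncard := by
  rw [ncard_eq_sum_cc]
  calc b * d = ∑ _j : Fin b, d := by simp [Finset.sum_const, Finset.card_univ, Nat.mul_comm]
  _ ≤ ∑ j, cc S j := Finset.sum_le_sum fun j _ => h j

/-- Construction A : two full columns, size `2*a`. -/
lemma constrA (ha : 2 ≤ a) (hb : 2 ≤ b) :
    ∃ S : Set (Fin a × Fin b), TotalTwoDom (K a □ K b) S ∧ S.ncard = 2 * a := by
  have hb1 : (1 : ℕ) < b := hb
  have hb0 : (0 : ℕ) < b := by omega
  have ha1 : (1 : ℕ) < a := ha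
  have ha0 : (0 : ℕ) < a := by omega
  set j0 : Fin b := ⟨0, hb0⟩
  set j1 : Fin b := ⟨1, hb1⟩
  have hj : j0 ≠ j1 := by simp [j0, j1, Fin.ext_iff]
  refine ⟨{p | p.2 = j0 ∨ p.2 = j1}, ?_, ?_⟩
  · rw [tdom_iff]
    intro v
    have hrc : 2 ≤ rc {p : Fin a × Fin b | p.2 = j0 ∨ p.2 = j1} v.1 := by
      apply two_le_ncard (x := (v.1, j0)) (y := (v.1, j1))
      · exact ⟨Or.inl rfl, rfl⟩
      · exact ⟨Or.inr rfl, rfl⟩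
      · simp [Prod.ext_iff, hj]
    by_cases hv : v ∈ {p : Fin a × Fin b | p.2 = j0 ∨ p.2 = j1}
    · have hcc : 2 ≤ cc {p : Fin a × Fin b | p.2 = j0 ∨ p.2 = j1} v.2 := by
        apply two_le_ncard (x := (⟨0, ha0⟩, v.2)) (y := (⟨1, ha1⟩, v.2))
        · exact ⟨hv, rfl⟩
        · exact ⟨hv, rfl⟩
        · simp [Prod.ext_iff, Fin.ext_iff]
      simp only [hv, if_true]
      omega
    · simp only [hv, if_false]
      omega
  · rw [ncard_eq_sum_rc]
    have : ∀ i : Fin a, rc {p : Fin a × Fin b | p.2 = j0 ∨ p.2 = j1} i = 2 := by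
      intro i
      have : {p : Fin a × Fin b | p.2 = j0 ∨ p.2 = j1} ∩ {p | p.1 = i}
          = {(i, j0), (i, j1)} := by
        ext p
        simp only [Set.mem_inter_iff, Set.mem_setOf_eq, Set.mem_insert_iff,
          Set.mem_singleton_iff, Prod.ext_iff]
        constructor
        · rintro ⟨h1 | h1, h2⟩
          · exact Or.inl ⟨h2, h1⟩
          · exact Or.inr ⟨h2, h1⟩
        · rintro (⟨h1, h2⟩ | ⟨h1, h2⟩)
          · exact ⟨Or.inl h2, h1⟩
          · exact ⟨Or.inr h2, h1⟩
      unfold rc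
      rw [this]
      exact Set.ncard_pair (by simp [Prod.ext_iff, hj])
    simp [this, Finset.sum_const, Finset.card_univ, Nat.mul_comm]

/-- Construction B : two full rows, size `2*b`. -/
lemma constrB (ha : 2 ≤ a) (hb : 2 ≤ b) :
    ∃ S : Set (Fin a × Fin b), TotalTwoDom (K a □ K b) S ∧ S.ncard = 2 * b := by
  have hb1 : (1 : ℕ) < b := hb
  have hb0 : (0 : ℕ) < b := by omega
  have ha1 : (1 : ℕ) < a := ha
  have ha0 : (0 : ℕ) < a := by omega
  set i0 : Fin a := ⟨0, ha0⟩
  set i1 : Fin a := ⟨1, ha1⟩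
  have hi : i0 ≠ i1 := by simp [i0, i1, Fin.ext_iff]
  refine ⟨{p | p.1 = i0 ∨ p.1 = i1}, ?_, ?_⟩
  · rw [tdom_iff]
    intro v
    have hcc : 2 ≤ cc {p : Fin a × Fin b | p.1 = i0 ∨ p.1 = i1} v.2 := by
      apply two_le_ncard (x := (i0, v.2)) (y := (i1, v.2))
      · exact ⟨Or.inl rfl, rfl⟩
      · exact ⟨Or.inr rfl, rfl⟩
      · simp [Prod.ext_iff, hi]
    by_cases hv : v ∈ {p : Fin a × Fin b | p.1 = i0 ∨ p.1 = i1}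
    · have hrc : 2 ≤ rc {p : Fin a × Fin b | p.1 = i0 ∨ p.1 = i1} v.1 := by
        apply two_le_ncard (x := (v.1, ⟨0, hb0⟩)) (y := (v.1, ⟨1, hb1⟩))
        · exact ⟨hv, rfl⟩
        · exact ⟨hv, rfl⟩
        · simp [Prod.ext_iff, Fin.ext_iff]
      simp only [hv, if_true]
      omega
    · simp only [hv, if_false]
      omega
  · rw [ncard_eq_sum_cc]
    have : ∀ j : Fin b, cc {p : Fin a × Fin b | p.1 = i0 ∨ p.1 = i1} j = 2 := by
      intro j
      have : {p : Fin a × Fin b | p.1 = i0 ∨ p.1 = i1} ∩ {p | p.2 = j}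
          = {(i0, j), (i1, j)} := by
        ext p
        simp only [Set.mem_inter_iff, Set.mem_setOf_eq, Set.mem_insert_iff,
          Set.mem_singleton_iff, Prod.ext_iff]
        constructor
        · rintro ⟨h1 | h1, h2⟩
          · exact Or.inl ⟨h1, h2⟩
          · exact Or.inr ⟨h1, h2⟩
        · rintro (⟨h1, h2⟩ | ⟨h1, h2⟩)
          · exact ⟨Or.inl h1, h2⟩
          · exact ⟨Or.inr h1, h2⟩
      unfold cc
      rw [this]
      exact Set.ncard_pair (by simp [Prod.ext_iff, hi])
    simp [this, Finset.sum_const, Finset.card_univ, Nat.mul_comm]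

lemma tdom_univ (ha : 2 ≤ a) (hb : 2 ≤ b) :
    TotalTwoDom (K a □ K b) (Set.univ : Set (Fin a × Fin b)) := by
  rw [tdom_iff]
  intro v
  have hrc : 2 ≤ rc (Set.univ : Set (Fin a × Fin b)) v.1 := by
    apply two_le_ncard (x := (v.1, ⟨0, by omega⟩)) (y := (v.1, ⟨1, by omega⟩))
    · exact ⟨trivial, rfl⟩
    · exact ⟨trivial, rfl⟩
    · simp [Prod.ext_iff, Fin.ext_iff]
  have hcc : 2 ≤ cc (Set.univ : Set (Fin a × Fin b)) v.2 := by
    apply two_le_ncard (x := ((⟨0, by omega⟩ : Fin a), v.2)) (y := ((⟨1, by omega⟩ : Fin a), v.2))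
    · exact ⟨trivial, rfl⟩
    · exact ⟨trivial, rfl⟩
    · simp [Prod.ext_iff, Fin.ext_iff]
  split_ifs <;> omega

section Upper

variable {n m : ℕ}

def em : Fin n × Fin m → Fin (n+1) × Fin (m+1) := fun p => (p.1.castSucc, p.2.castSucc)

lemma em_inj : Function.Injective (em (n := n) (m := m)) := by
  rintro ⟨p1, p2⟩ ⟨q1, q2⟩ h
  simp only [em, Prod.ext_iff] at h ⊢
  exact ⟨Fin.castSucc_injective _ h.1, Fin.castSucc_injective _ h.2⟩

lemma castSucc_ne_last (i : Fin n) : i.castSucc ≠ Fin.last n :=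
  Fin.ne_of_lt (Fin.castSucc_lt_last i)

lemma rc_em_ge (S : Set (Fin n × Fin m)) (i : Fin n) :
    rc S i ≤ rc (em '' S) i.castSucc := by
  have h1 : em '' (S ∩ {p | p.1 = i}) ⊆ (em '' S) ∩ {p | p.1 = i.castSucc} := by
    rintro _ ⟨p, ⟨hp, hpi⟩, rfl⟩
    exact ⟨⟨p, hp, rfl⟩, by simp only [em, Set.mem_setOf_eq]; exact congrArg Fin.castSucc hpi⟩
  calc rc S i = (em '' (S ∩ {p | p.1 = i})).ncard :=
        (Set.ncard_image_of_injective _ em_inj).symm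
  _ ≤ _ := Set.ncard_le_ncard h1 (Set.toFinite _)

lemma cc_em_ge (S : Set (Fin n × Fin m)) (j : Fin m) :
    cc S j ≤ cc (em '' S) j.castSucc := by
  have h1 : em '' (S ∩ {p | p.2 = j}) ⊆ (em '' S) ∩ {p | p.2 = j.castSucc} := by
    rintro _ ⟨p, ⟨hp, hpj⟩, rfl⟩
    exact ⟨⟨p, hp, rfl⟩, by simp only [em, Set.mem_setOf_eq]; exact congrArg Fin.castSucc hpj⟩
  calc cc S j = (em '' (S ∩ {p | p.2 = j})).ncard :=
        (Set.ncard_image_of_injective _ em_inj).symm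
  _ ≤ _ := Set.ncard_le_ncard h1 (Set.toFinite _)

lemma upper (hn : 2 ≤ n) (hm : 2 ≤ m) (S : Set (Fin n × Fin m))
    (hS : TotalTwoDom (K n □ K m) S) :
    ∃ S' : Set (Fin (n+1) × Fin (m+1)),
      TotalTwoDom (K (n+1) □ K (m+1)) S' ∧ S'.ncard ≤ S.ncard + 2 := by
  rw [tdom_iff] at hS
  by_cases hrow : ∀ i, 2 ≤ rc S i
  · -- U1 : all rows have ≥ 2; add two vertices in the new last row.
    have hn0 : (0:ℕ) < n := by omega
    set i0 : Fin n := ⟨0, hn0⟩ with hi0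
    obtain ⟨p, hp, hp1⟩ := exists_of_rc_pos (S := S) (i := i0) (by have := hrow i0; omega)
    obtain ⟨q, hq, hq', hq1⟩ : ∃ q, q ∈ S ∧ q ≠ p ∧ q.1 = i0 := by
      have h2 := hrow i0
      have hfin : (S ∩ {r | r.1 = i0}).Finite := Set.toFinite _
      obtain ⟨x, y, hx, hy, hxy⟩ := (Set.one_lt_ncard_iff hfin).1 (by unfold rc at h2; omega)
      by_cases hxp : x = p
      · exact ⟨y, hy.1, by rw [← hxp]; exact fun h => hxy h.symm, hy.2⟩
      · exact ⟨x, hx.1, hxp, hx.2⟩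
    have hpq2 : p.2 ≠ q.2 := by
      intro h
      exact hq' (Prod.ext (hq1.trans hp1.symm) h.symm)
    set u1 : Fin (n+1) × Fin (m+1) := (Fin.last n, p.2.castSucc)
    set u2 : Fin (n+1) × Fin (m+1) := (Fin.last n, q.2.castSucc)
    refine ⟨em '' S ∪ {u1, u2}, ?_, ?_⟩
    · rw [tdom_iff]
      intro v
      have hrc' : ∀ i : Fin (n+1), 2 ≤ rc (em '' S ∪ {u1, u2}) i := by
        intro i
        rcases Fin.eq_castSucc_or_eq_last i with ⟨i', rfl⟩ | rfl
        · calc 2 ≤ rc S i' := hrow i'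
          _ ≤ rc (em '' S) i'.castSucc := rc_em_ge S i'
          _ ≤ _ := rc_mono Set.subset_union_left _
        · apply two_le_ncard (x := u1) (y := u2)
          · exact ⟨Or.inr (Or.inl rfl), rfl⟩
          · exact ⟨Or.inr (Or.inr rfl), rfl⟩
          · simp [u1, u2, Prod.ext_iff]
            exact fun h => hpq2 h
      by_cases hv : v ∈ em '' S ∪ {u1, u2}
      · simp only [hv, if_true]
        rcases hv with ⟨r, hr, rfl⟩ | hv1
        · have h4 := hS r
          simp only [hr, if_true] at h4
          have h5 : rc S r.1 ≤ rc (em '' S ∪ {u1, u2}) (em r).1 := by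
            calc rc S r.1 ≤ rc (em '' S) r.1.castSucc := rc_em_ge S r.1
            _ ≤ _ := rc_mono Set.subset_union_left _
          have h6 : cc S r.2 ≤ cc (em '' S ∪ {u1, u2}) (em r).2 := by
            calc cc S r.2 ≤ cc (em '' S) r.2.castSucc := cc_em_ge S r.2
            _ ≤ _ := cc_mono Set.subset_union_left _
          omega
        · have hcc2 : 2 ≤ cc (em '' S ∪ {u1, u2}) v.2 := by
            rcases hv1 with rfl | rfl
            · apply two_le_ncard (x := u1) (y := em p)
              · exact ⟨Or.inr (Or.inl rfl), rfl⟩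
              · exact ⟨Or.inl ⟨p, hp, rfl⟩, rfl⟩
              · simp [u1, em, Prod.ext_iff]
                intro h; exact (castSucc_ne_last p.1 h.symm).elim
            · apply two_le_ncard (x := u2) (y := em q)
              · exact ⟨Or.inr (Or.inr rfl), rfl⟩
              · exact ⟨Or.inl ⟨q, hq, rfl⟩, rfl⟩
              · simp [u2, em, Prod.ext_iff]
                intro h; exact (castSucc_ne_last q.1 h.symm).elim
          have := hrc' v.1
          omega
      · simp only [hv, if_false]
        have := hrc' v.1
        omega
    · calc (em '' S ∪ {u1, u2}).ncard ≤ (em '' S).ncard + ({u1, u2} : Set _).ncard :=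
          Set.ncard_union_le _ _
      _ ≤ S.ncard + 2 := by
          rw [Set.ncard_image_of_injective _ em_inj]
          have : ({u1, u2} : Set (Fin (n+1) × Fin (m+1))).ncard ≤ 2 := by
            calc ({u1, u2} : Set _).ncard ≤ ({u2} : Set _).ncard + 1 := Set.ncard_insert_le _ _
            _ ≤ 2 := by rw [Set.ncard_singleton]
          omega
  by_cases hcol : ∀ j, 2 ≤ cc S j
  · -- U2 : all columns have ≥ 2; add two vertices in the new last column.
    have hm0 : (0:ℕ) < m := by omega
    set j0 : Fin m := ⟨0, hm0⟩ with hj0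
    obtain ⟨p, hp, hp2⟩ := exists_of_cc_pos (S := S) (j := j0) (by have := hcol j0; omega)
    obtain ⟨q, hq, hq', hq2⟩ : ∃ q, q ∈ S ∧ q ≠ p ∧ q.2 = j0 := by
      have h2 := hcol j0
      have hfin : (S ∩ {r | r.2 = j0}).Finite := Set.toFinite _
      obtain ⟨x, y, hx, hy, hxy⟩ := (Set.one_lt_ncard_iff hfin).1 (by unfold cc at h2; omega)
      by_cases hxp : x = p
      · exact ⟨y, hy.1, by rw [← hxp]; exact fun h => hxy h.symm, hy.2⟩
      · exact ⟨x, hx.1, hxp, hx.2⟩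
    have hpq1 : p.1 ≠ q.1 := by
      intro h
      exact hq' (Prod.ext h.symm (hq2.trans hp2.symm))
    set u1 : Fin (n+1) × Fin (m+1) := (p.1.castSucc, Fin.last m)
    set u2 : Fin (n+1) × Fin (m+1) := (q.1.castSucc, Fin.last m)
    refine ⟨em '' S ∪ {u1, u2}, ?_, ?_⟩
    · rw [tdom_iff]
      intro v
      have hcc' : ∀ j : Fin (m+1), 2 ≤ cc (em '' S ∪ {u1, u2}) j := by
        intro j
        rcases Fin.eq_castSucc_or_eq_last j with ⟨j', rfl⟩ | rfl
        · calc 2 ≤ cc S j' := hcol j'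
          _ ≤ cc (em '' S) j'.castSucc := cc_em_ge S j'
          _ ≤ _ := cc_mono Set.subset_union_left _
        · apply two_le_ncard (x := u1) (y := u2)
          · exact ⟨Or.inr (Or.inl rfl), rfl⟩
          · exact ⟨Or.inr (Or.inr rfl), rfl⟩
          · simp [u1, u2, Prod.ext_iff]
            intro h; exact absurd h hpq1
      by_cases hv : v ∈ em '' S ∪ {u1, u2}
      · simp only [hv, if_true]
        rcases hv with ⟨r, hr, rfl⟩ | hv1
        · have h4 := hS r
          simp only [hr, if_true] at h4
          have h5 : rc S r.1 ≤ rc (em '' S ∪ {u1, u2}) (em r).1 := by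
            calc rc S r.1 ≤ rc (em '' S) r.1.castSucc := rc_em_ge S r.1
            _ ≤ _ := rc_mono Set.subset_union_left _
          have h6 : cc S r.2 ≤ cc (em '' S ∪ {u1, u2}) (em r).2 := by
            calc cc S r.2 ≤ cc (em '' S) r.2.castSucc := cc_em_ge S r.2
            _ ≤ _ := cc_mono Set.subset_union_left _
          omega
        · have hrc2 : 2 ≤ rc (em '' S ∪ {u1, u2}) v.1 := by
            rcases hv1 with rfl | rfl
            · apply two_le_ncard (x := u1) (y := em p)
              · exact ⟨Or.inr (Or.inl rfl), rfl⟩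
              · exact ⟨Or.inl ⟨p, hp, rfl⟩, rfl⟩
              · simp [u1, em, Prod.ext_iff]
                intro h; exact (castSucc_ne_last p.2 h.symm).elim
            · apply two_le_ncard (x := u2) (y := em q)
              · exact ⟨Or.inr (Or.inr rfl), rfl⟩
              · exact ⟨Or.inl ⟨q, hq, rfl⟩, rfl⟩
              · simp [u2, em, Prod.ext_iff]
                intro h; exact (castSucc_ne_last q.2 h.symm).elim
          have := hcc' v.2
          omega
      · simp only [hv, if_false]
        have := hcc' v.2
        omega
    · calc (em '' S ∪ {u1, u2}).ncard ≤ (em '' S).ncard + ({u1, u2} : Set _).ncard :=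
          Set.ncard_union_le _ _
      _ ≤ S.ncard + 2 := by
          rw [Set.ncard_image_of_injective _ em_inj]
          have : ({u1, u2} : Set (Fin (n+1) × Fin (m+1))).ncard ≤ 2 := by
            calc ({u1, u2} : Set _).ncard ≤ ({u2} : Set _).ncard + 1 := Set.ncard_insert_le _ _
            _ ≤ 2 := by rw [Set.ncard_singleton]
          omega
  · -- U3 : there is a row with ≤ 1 and a column with ≤ 1.
    push_neg at hrow hcol
    obtain ⟨is, his⟩ := hrow
    obtain ⟨js, hjs⟩ := hcol
    have hallr : ∀ i, 1 ≤ rc S i := by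
      intro i
      by_contra h
      push_neg at h
      have hnotin : (i, js) ∉ S := by
        intro hmem
        have h5 : 1 ≤ rc S i := rc_pos_of_mem hmem
        omega
      have h4 := hS (i, js)
      simp only [hnotin, if_false] at h4
      omega
    have hallc : ∀ j, 1 ≤ cc S j := by
      intro j
      by_contra h
      push_neg at h
      have hnotin : (is, j) ∉ S := by
        intro hmem
        have h5 : 1 ≤ cc S j := cc_pos_of_mem hmem
        omega
      have h4 := hS (is, j)
      simp only [hnotin, if_false] at h4
      omega
    obtain ⟨w, hw, hw1⟩ := exists_of_rc_pos (S := S) (i := is) (hallr is)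
    have hhubc : 3 ≤ cc S w.2 := by
      have h4 := hS w
      simp only [hw, if_true] at h4
      rw [hw1] at h4
      omega
    obtain ⟨x, hx, hx2⟩ := exists_of_cc_pos (S := S) (j := js) (hallc js)
    have hhubr : 3 ≤ rc S x.1 := by
      have h4 := hS x
      simp only [hx, if_true] at h4
      rw [hx2] at h4
      omega
    set u1 : Fin (n+1) × Fin (m+1) := (Fin.last n, w.2.castSucc)
    set u2 : Fin (n+1) × Fin (m+1) := (x.1.castSucc, Fin.last m)
    refine ⟨em '' S ∪ {u1, u2}, ?_, ?_⟩
    · rw [tdom_iff]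
      intro v
      have hr' : ∀ i : Fin (n+1), 1 ≤ rc (em '' S ∪ {u1, u2}) i := by
        intro i
        rcases Fin.eq_castSucc_or_eq_last i with ⟨i', rfl⟩ | rfl
        · calc 1 ≤ rc S i' := hallr i'
          _ ≤ rc (em '' S) i'.castSucc := rc_em_ge S i'
          _ ≤ _ := rc_mono Set.subset_union_left _
        · exact rc_pos_of_mem (p := u1) (Or.inr (Or.inl rfl))
      have hc' : ∀ j : Fin (m+1), 1 ≤ cc (em '' S ∪ {u1, u2}) j := by
        intro j
        rcases Fin.eq_castSucc_or_eq_last j with ⟨j', rfl⟩ | rfl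
        · calc 1 ≤ cc S j' := hallc j'
          _ ≤ cc (em '' S) j'.castSucc := cc_em_ge S j'
          _ ≤ _ := cc_mono Set.subset_union_left _
        · exact cc_pos_of_mem (p := u2) (Or.inr (Or.inr rfl))
      by_cases hv : v ∈ em '' S ∪ {u1, u2}
      · simp only [hv, if_true]
        rcases hv with ⟨r, hr, rfl⟩ | hv1
        · have h4 := hS r
          simp only [hr, if_true] at h4
          have h5 : rc S r.1 ≤ rc (em '' S ∪ {u1, u2}) (em r).1 := by
            calc rc S r.1 ≤ rc (em '' S) r.1.castSucc := rc_em_ge S r.1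
            _ ≤ _ := rc_mono Set.subset_union_left _
          have h6 : cc S r.2 ≤ cc (em '' S ∪ {u1, u2}) (em r).2 := by
            calc cc S r.2 ≤ cc (em '' S) r.2.castSucc := cc_em_ge S r.2
            _ ≤ _ := cc_mono Set.subset_union_left _
          omega
        · rcases hv1 with rfl | rfl
          · have h5 : 3 ≤ cc (em '' S ∪ {u1, u2}) u1.2 := by
              calc 3 ≤ cc S w.2 := hhubc
              _ ≤ cc (em '' S) w.2.castSucc := cc_em_ge S w.2
              _ ≤ _ := cc_mono Set.subset_union_left _
            have h6 := hr' u1.1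
            omega
          · have h5 : 3 ≤ rc (em '' S ∪ {u1, u2}) u2.1 := by
              calc 3 ≤ rc S x.1 := hhubr
              _ ≤ rc (em '' S) x.1.castSucc := rc_em_ge S x.1
              _ ≤ _ := rc_mono Set.subset_union_left _
            have h6 := hc' u2.2
            omega
      · simp only [hv, if_false]
        have h5 := hr' v.1
        have h6 := hc' v.2
        omega
    · calc (em '' S ∪ {u1, u2}).ncard ≤ (em '' S).ncard + ({u1, u2} : Set _).ncard :=
          Set.ncard_union_le _ _
      _ ≤ S.ncard + 2 := by
          rw [Set.ncard_image_of_injective _ em_inj]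
          have : ({u1, u2} : Set (Fin (n+1) × Fin (m+1))).ncard ≤ 2 := by
            calc ({u1, u2} : Set _).ncard ≤ ({u2} : Set _).ncard + 1 := Set.ncard_insert_le _ _
            _ ≤ 2 := by rw [Set.ncard_singleton]
          omega

end Upper

section Lower

variable {n m : ℕ}

def em2 (i0 : Fin (n+1)) (j0 : Fin (m+1)) : Fin n × Fin m → Fin (n+1) × Fin (m+1) :=
  fun p => (i0.succAbove p.1, j0.succAbove p.2)

lemma em2_inj (i0 : Fin (n+1)) (j0 : Fin (m+1)) : Function.Injective (em2 i0 j0) := by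
  rintro ⟨p1, p2⟩ ⟨q1, q2⟩ h
  simp only [em2, Prod.ext_iff] at h ⊢
  exact ⟨Fin.succAbove_right_injective h.1, Fin.succAbove_right_injective h.2⟩

lemma lower (hn : 2 ≤ n) (hm : 2 ≤ m) (S' : Set (Fin (n+1) × Fin (m+1)))
    (hS' : TotalTwoDom (K (n+1) □ K (m+1)) S') :
    ∃ S : Set (Fin n × Fin m), TotalTwoDom (K n □ K m) S ∧ S.ncard + 1 ≤ S'.ncard := by
  by_cases hbig : 2 * min n m + 1 ≤ S'.ncard
  · by_cases hnm : n ≤ m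
    · obtain ⟨S, hS, hcard⟩ := constrA hn hm
      refine ⟨S, hS, ?_⟩
      have : min n m = n := Nat.min_eq_left hnm
      omega
    · obtain ⟨S, hS, hcard⟩ := constrB hn hm
      refine ⟨S, hS, ?_⟩
      have : min n m = m := Nat.min_eq_right (by omega)
      omega
  · push_neg at hbig
    have hk : S'.ncard ≤ 2 * min n m := by omega
    rw [tdom_iff] at hS'
    -- every row and every column of S' is nonempty
    have hallr' : ∀ i, 1 ≤ rc S' i := by
      intro i
      by_contra h
      push_neg at h
      have hcc2 : ∀ j, 2 ≤ cc S' j := by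
        intro j
        have hnotin : (i, j) ∉ S' := by
          intro hmem
          have h5 : 1 ≤ rc S' i := rc_pos_of_mem hmem
          omega
        have h4 := hS' (i, j)
        simp only [hnotin, if_false] at h4
        omega
      have := sum_le_of_all_cc hcc2
      have hmin : min n m ≤ m := Nat.min_le_right n m
      omega
    have hallc' : ∀ j, 1 ≤ cc S' j := by
      intro j
      by_contra h
      push_neg at h
      have hrc2 : ∀ i, 2 ≤ rc S' i := by
        intro i
        have hnotin : (i, j) ∉ S' := by
          intro hmem
          have h5 : 1 ≤ cc S' j := cc_pos_of_mem hmem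
          omega
        have h4 := hS' (i, j)
        simp only [hnotin, if_false] at h4
        omega
      have := sum_le_of_all_rc hrc2
      have hmin : min n m ≤ n := Nat.min_le_left n m
      omega
    -- a singleton row exists
    obtain ⟨i0, hi0⟩ : ∃ i0, rc S' i0 = 1 := by
      by_contra h
      push_neg at h
      have hrc2 : ∀ i, 2 ≤ rc S' i := by
        intro i
        have := hallr' i
        have := h i
        omega
      have := sum_le_of_all_rc hrc2
      have hmin : min n m ≤ n := Nat.min_le_left n m
      omega
    obtain ⟨w, hw⟩ := Set.ncard_eq_one.1 hi0
    have hwS : w ∈ S' ∧ w.1 = i0 := by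
      have : w ∈ S' ∩ {p | p.1 = i0} := by rw [hw]; rfl
      exact ⟨this.1, this.2⟩
    have huniq : ∀ p, p ∈ S' → p.1 = i0 → p = w := by
      intro p hp hp1
      have : p ∈ S' ∩ {q | q.1 = i0} := ⟨hp, hp1⟩
      rw [hw] at this
      exact this
    set j0 : Fin (m+1) := w.2 with hj0def
    have hwpair : w = (i0, j0) := Prod.ext hwS.2 rfl
    have hc3 : 3 ≤ cc S' j0 := by
      have h4 := hS' w
      simp only [hwS.1, if_true] at h4
      rw [hwS.2] at h4
      rw [← hj0def] at h4
      omega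
    -- the set of small rows meeting column j0
    set Z : Set (Fin n) := {i | (i0.succAbove i, j0) ∈ S'} with hZdef
    have hZcard : Z.ncard + 1 = cc S' j0 := by
      have himg : (fun i : Fin n => (i0.succAbove i, j0)) '' Z
          = (S' ∩ {p | p.2 = j0}) \ {w} := by
        ext p
        constructor
        · rintro ⟨i, hiZ, rfl⟩
          refine ⟨⟨hiZ, rfl⟩, ?_⟩
          simp only [Set.mem_singleton_iff, hwpair]
          intro hcon
          exact Fin.succAbove_ne i0 i (congrArg Prod.fst hcon)
        · rintro ⟨⟨hp, hp2⟩, hpw⟩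
          have hp1 : p.1 ≠ i0 := by
            intro hcon
            exact hpw (huniq p hp hcon)
          obtain ⟨i, hi⟩ := Fin.exists_succAbove_eq hp1
          refine ⟨i, ?_, ?_⟩
          · show (i0.succAbove i, j0) ∈ S'
            rw [hi]
            have : p = (p.1, j0) := Prod.ext rfl hp2
            rwa [← this]
          · exact Prod.ext hi (hp2.symm ▸ rfl)
      have hinj : Function.Injective (fun i : Fin n => (i0.succAbove i, j0)) := by
        intro x y hxy
        exact Fin.succAbove_right_injective (congrArg Prod.fst hxy)
      have h1 : Z.ncard = ((S' ∩ {p | p.2 = j0}) \ {w}).ncard := by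
        rw [← himg, Set.ncard_image_of_injective _ hinj]
      have hwmem : w ∈ S' ∩ {p | p.2 = j0} := ⟨hwS.1, rfl⟩
      have h2 := Set.ncard_diff_singleton_of_mem hwmem
      have h3 : 1 ≤ (S' ∩ {p | p.2 = j0}).ncard := by
        have := hallc' j0
        unfold cc at this
        omega
      unfold cc
      omega
    -- choose a free column j1
    obtain ⟨j1, hj1⟩ : ∃ j1 : Fin m, ∀ i ∈ Z, (i0.succAbove i, j0.succAbove j1) ∉ S' := by
      by_contra hcon
      push_neg at hcon
      choose g hg1 hg2 using hcon
      have hex : ∀ i : Fin (n+1), ∃ p, p ∈ S' ∧ p.1 = i := fun i => exists_of_rc_pos (hallr' i)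
      choose f hf1 hf2 using hex
      classical
      have hinjF : Function.Injective
          (Sum.elim (fun j : Fin m => (⟨(i0.succAbove (g j), j0.succAbove j), hg2 j⟩ : {p // p ∈ S'}))
            (fun i : Fin (n+1) => if hij : (i, j0) ∈ S' then (⟨(i, j0), hij⟩ : {p // p ∈ S'})
              else ⟨f i, hf1 i⟩)) := by
        rintro (j | i) (j' | i') hval
        · simp only [Sum.elim_inl, Subtype.mk_eq_mk, Prod.ext_iff] at hval
          rw [Fin.succAbove_right_injective hval.2]
        · exfalso
          simp only [Sum.elim_inl, Sum.elim_inr] at hval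
          by_cases hij : (i', j0) ∈ S'
          · rw [dif_pos hij] at hval
            simp only [Subtype.mk_eq_mk, Prod.ext_iff] at hval
            exact Fin.succAbove_ne j0 j hval.2
          · rw [dif_neg hij] at hval
            simp only [Subtype.mk_eq_mk] at hval
            apply hij
            have h5 : (f i').1 = i' := hf2 i'
            have h6 : i0.succAbove (g j) = i' := by
              rw [← h5, ← hval]
            have := hg1 j
            rw [hZdef] at this
            simp only [Set.mem_setOf_eq] at this
            rwa [h6] at this
        · exfalso
          simp only [Sum.elim_inl, Sum.elim_inr] at hval
          by_cases hij : (i, j0) ∈ S'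
          · rw [dif_pos hij] at hval
            simp only [Subtype.mk_eq_mk, Prod.ext_iff] at hval
            exact Fin.succAbove_ne j0 j' hval.2.symm
          · rw [dif_neg hij] at hval
            simp only [Subtype.mk_eq_mk] at hval
            apply hij
            have h5 : (f i).1 = i := hf2 i
            have h6 : i0.succAbove (g j') = i := by
              rw [← h5, hval]
            have := hg1 j'
            rw [hZdef] at this
            simp only [Set.mem_setOf_eq] at this
            rwa [h6] at this
        · simp only [Sum.elim_inr] at hval
          congr 1
          by_cases hij : (i, j0) ∈ S' <;> by_cases hij' : (i', j0) ∈ S'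
          · rw [dif_pos hij, dif_pos hij'] at hval
            simp only [Subtype.mk_eq_mk, Prod.ext_iff] at hval
            exact hval.1
          · rw [dif_pos hij, dif_neg hij'] at hval
            simp only [Subtype.mk_eq_mk] at hval
            have h5 : (f i').1 = i' := hf2 i'
            rw [← hval] at h5
            exact h5
          · rw [dif_neg hij, dif_pos hij'] at hval
            simp only [Subtype.mk_eq_mk] at hval
            have h5 : (f i).1 = i := hf2 i
            rw [hval] at h5
            exact h5.symm
          · rw [dif_neg hij, dif_neg hij'] at hval
            simp only [Subtype.mk_eq_mk] at hval
            have h5 : (f i).1 = i := hf2 i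
            have h6 : (f i').1 = i' := hf2 i'
            rw [hval, h6] at h5
            exact h5.symm
      have hcard := Nat.card_le_card_of_injective _ hinjF
      rw [Nat.card_sum, Nat.card_coe_set_eq] at hcard
      simp only [Nat.card_eq_fintype_card, Fintype.card_fin] at hcard
      have hmin1 : min n m ≤ n := Nat.min_le_left n m
      have hmin2 : min n m ≤ m := Nat.min_le_right n m
      omega
    -- the surgery set
    set T : Set (Fin n × Fin m) := {p | (i0.succAbove p.1, j0.succAbove p.2) ∈ S'} with hTdef
    set R : Set (Fin n × Fin m) := (fun i => (i, j1)) '' Z with hRdef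
    set U : Set (Fin n × Fin m) := T ∪ R with hUdef
    have hTsub : em2 i0 j0 '' T ⊆ S' := by
      rintro _ ⟨p, hp, rfl⟩
      exact hp
    -- row counts
    have hrowT : ∀ i : Fin n, em2 i0 j0 '' (T ∩ {p | p.1 = i})
        = (S' ∩ {p | p.1 = i0.succAbove i}) \ {p | p.2 = j0} := by
      intro i
      ext p
      constructor
      · rintro ⟨q, ⟨hq, hq1⟩, rfl⟩
        refine ⟨⟨hq, ?_⟩, ?_⟩
        · simp only [em2, Set.mem_setOf_eq]
          exact congrArg i0.succAbove hq1
        · simp only [em2, Set.mem_setOf_eq]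
          exact Fin.succAbove_ne j0 q.2
      · rintro ⟨⟨hp, hp1⟩, hp2⟩
        simp only [Set.mem_setOf_eq] at hp1 hp2
        obtain ⟨j, hj⟩ := Fin.exists_succAbove_eq hp2
        refine ⟨(i, j), ⟨?_, rfl⟩, ?_⟩
        · show (i0.succAbove i, j0.succAbove j) ∈ S'
          rw [hj, ← hp1]
          exact (show p = (p.1, p.2) from rfl) ▸ hp
        · simp only [em2]
          exact Prod.ext hp1.symm hj
    have hrcT : ∀ i : Fin n, rc S' (i0.succAbove i)
        ≤ rc T i + (if (i0.succAbove i, j0) ∈ S' then 1 else 0) := by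
      intro i
      have h1 : rc T i = ((S' ∩ {p | p.1 = i0.succAbove i}) \ {p | p.2 = j0}).ncard := by
        unfold rc
        rw [← hrowT i, Set.ncard_image_of_injective _ (em2_inj i0 j0)]
      have hsub : S' ∩ {p | p.1 = i0.succAbove i}
          ⊆ ((S' ∩ {p | p.1 = i0.succAbove i}) \ {p | p.2 = j0})
            ∪ (S' ∩ {(i0.succAbove i, j0)}) := by
        intro p ⟨hp, hp1⟩
        by_cases hp2 : p.2 = j0
        · right
          exact ⟨hp, by simp only [Set.mem_singleton_iff]; exact Prod.ext hp1 hp2⟩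
        · left
          exact ⟨⟨hp, hp1⟩, hp2⟩
      have h2 : (S' ∩ {(i0.succAbove i, j0)}).ncard
          ≤ (if (i0.succAbove i, j0) ∈ S' then 1 else 0) := by
        by_cases hij : (i0.succAbove i, j0) ∈ S'
        · simp only [hij, if_true]
          calc (S' ∩ {(i0.succAbove i, j0)}).ncard
              ≤ ({(i0.succAbove i, j0)} : Set _).ncard :=
                Set.ncard_le_ncard Set.inter_subset_right (Set.toFinite _)
          _ = 1 := Set.ncard_singleton _
        · have : S' ∩ {(i0.succAbove i, j0)} = ∅ := by
            ext p
            simp only [Set.mem_inter_iff, Set.mem_singleton_iff, Set.mem_empty_iff_false,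
              iff_false, not_and]
            rintro hp rfl
            exact hij hp
          rw [this, Set.ncard_empty]
          simp
      calc rc S' (i0.succAbove i)
          ≤ (((S' ∩ {p | p.1 = i0.succAbove i}) \ {p | p.2 = j0})
            ∪ (S' ∩ {(i0.succAbove i, j0)})).ncard :=
            Set.ncard_le_ncard hsub (Set.toFinite _)
      _ ≤ ((S' ∩ {p | p.1 = i0.succAbove i}) \ {p | p.2 = j0}).ncard
            + (S' ∩ {(i0.succAbove i, j0)}).ncard := Set.ncard_union_le _ _
      _ ≤ rc T i + (if (i0.succAbove i, j0) ∈ S' then 1 else 0) := by omega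
    -- column counts : cc S' (succAbove j) ≤ cc T j
    have hccT : ∀ j : Fin m, cc S' (j0.succAbove j) ≤ cc T j := by
      intro j
      have hsub : S' ∩ {p | p.2 = j0.succAbove j} ⊆ em2 i0 j0 '' (T ∩ {p | p.2 = j}) := by
        intro p ⟨hp, hp2⟩
        simp only [Set.mem_setOf_eq] at hp2
        have hp1 : p.1 ≠ i0 := by
          intro hcon
          have := huniq p hp hcon
          rw [this, hwpair] at hp2
          exact Fin.succAbove_ne j0 j hp2.symm
        obtain ⟨i, hi⟩ := Fin.exists_succAbove_eq hp1
        refine ⟨(i, j), ⟨?_, rfl⟩, ?_⟩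
        · show (i0.succAbove i, j0.succAbove j) ∈ S'
          rw [hi, ← hp2]
          exact (show p = (p.1, p.2) from rfl) ▸ hp
        · simp only [em2]
          exact Prod.ext hi hp2.symm
      calc cc S' (j0.succAbove j) ≤ (em2 i0 j0 '' (T ∩ {p | p.2 = j})).ncard :=
            Set.ncard_le_ncard hsub (Set.toFinite _)
      _ = cc T j := Set.ncard_image_of_injective _ (em2_inj i0 j0)
    -- row counts of U
    have hrcU : ∀ i : Fin n, rc S' (i0.succAbove i) ≤ rc U i := by
      intro i
      by_cases hiZ : i ∈ Z
      · have hnotT : (i, j1) ∉ T ∩ {p | p.1 = i} := by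
          rintro ⟨hT, -⟩
          exact hj1 i hiZ hT
        have hins : insert (i, j1) (T ∩ {p | p.1 = i}) ⊆ U ∩ {p | p.1 = i} := by
          rintro p (rfl | ⟨hp, hp1⟩)
          · exact ⟨Or.inr ⟨i, hiZ, rfl⟩, rfl⟩
          · exact ⟨Or.inl hp, hp1⟩
        have h1 : rc T i + 1 ≤ rc U i := by
          calc rc T i + 1 = (insert (i, j1) (T ∩ {p | p.1 = i})).ncard :=
                (Set.ncard_insert_of_notMem hnotT (Set.toFinite _)).symm
          _ ≤ rc U i := Set.ncard_le_ncard hins (Set.toFinite _)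
        have h2 := hrcT i
        have h3 : (i0.succAbove i, j0) ∈ S' := hiZ
        simp only [h3, if_true] at h2
        omega
      · have h2 := hrcT i
        have h3 : (i0.succAbove i, j0) ∉ S' := hiZ
        simp only [h3, if_false] at h2
        have h4 : rc T i ≤ rc U i := rc_mono Set.subset_union_left i
        omega
    have hccU : ∀ j : Fin m, cc S' (j0.succAbove j) ≤ cc U j := by
      intro j
      have := hccT j
      have h4 : cc T j ≤ cc U j := cc_mono Set.subset_union_left j
      omega
    -- extra count for column j1
    have hccUj1 : cc S' (j0.succAbove j1) + Z.ncard ≤ cc U j1 := by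
      have hdisj : Disjoint (T ∩ {p | p.2 = j1}) R := by
        rw [Set.disjoint_left]
        rintro p ⟨hpT, -⟩ ⟨i, hiZ, rfl⟩
        exact hj1 i hiZ hpT
      have hsub : (T ∩ {p | p.2 = j1}) ∪ R ⊆ U ∩ {p | p.2 = j1} := by
        rintro p (⟨hpT, hp2⟩ | ⟨i, hiZ, rfl⟩)
        · exact ⟨Or.inl hpT, hp2⟩
        · exact ⟨Or.inr ⟨i, hiZ, rfl⟩, rfl⟩
      have hRcard : R.ncard = Z.ncard := by
        rw [hRdef]
        exact Set.ncard_image_of_injective _ (fun x y hxy => congrArg Prod.fst hxy)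
      have h1 : cc T j1 + Z.ncard ≤ cc U j1 := by
        calc cc T j1 + Z.ncard = ((T ∩ {p | p.2 = j1}) ∪ R).ncard := by
              unfold cc
              rw [Set.ncard_union_eq hdisj (Set.toFinite _) (Set.toFinite _), hRcard]
        _ ≤ cc U j1 := Set.ncard_le_ncard hsub (Set.toFinite _)
      have := hccT j1
      omega
    refine ⟨U, ?_, ?_⟩
    · rw [tdom_iff]
      intro v
      by_cases hv : v ∈ U
      · simp only [hv, if_true]
        rcases hv with hvT | ⟨i, hiZ, rfl⟩
        · have h4 := hS' (em2 i0 j0 v)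
          have hmem : em2 i0 j0 v ∈ S' := hvT
          simp only [hmem, if_true] at h4
          have h5 := hrcU v.1
          have h6 := hccU v.2
          simp only [em2] at h4
          omega
        · show 2 + 2 ≤ rc U i + cc U j1
          have h5 := hrcU i
          have h6 := hccUj1
          have h7 := hallr' (i0.succAbove i)
          have h8 := hallc' (j0.succAbove j1)
          omega
      · simp only [hv, if_false]
        have h5 := hrcU v.1
        have h6 := hccU v.2
        have h7 := hallr' (i0.succAbove v.1)
        have h8 := hallc' (j0.succAbove v.2)
        omega
    · -- size : U.ncard + 1 ≤ S'.ncard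
      have hRcard : R.ncard ≤ Z.ncard := by
        rw [hRdef]
        exact Set.ncard_image_le (Set.toFinite _)
      have h1 : U.ncard ≤ T.ncard + Z.ncard := by
        calc U.ncard ≤ T.ncard + R.ncard := Set.ncard_union_le _ _
        _ ≤ T.ncard + Z.ncard := by omega
      have hdisj : Disjoint (em2 i0 j0 '' T) (S' ∩ {p | p.2 = j0}) := by
        rw [Set.disjoint_left]
        rintro _ ⟨p, hp, rfl⟩ ⟨-, hc⟩
        simp only [em2, Set.mem_setOf_eq] at hc
        exact Fin.succAbove_ne j0 p.2 hc
      have hsub2 : (em2 i0 j0 '' T) ∪ (S' ∩ {p | p.2 = j0}) ⊆ S' := by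
        rintro p (hp | ⟨hp, -⟩)
        · exact hTsub hp
        · exact hp
      have h2 : T.ncard + cc S' j0 ≤ S'.ncard := by
        have := Set.ncard_union_eq hdisj (Set.toFinite _) (Set.toFinite _)
        have hle := Set.ncard_le_ncard hsub2 (Set.toFinite _)
        rw [Set.ncard_image_of_injective _ (em2_inj i0 j0)] at this
        unfold cc
        omega
      omega

end Lower

end RookAux

theorem stmt_16 (n m : ℕ) (hn : 2 ≤ n) (hm : 2 ≤ m) :
    gamma2t (K n □ K m) + 1 ≤ gamma2t (K (n + 1) □ K (m + 1)) ∧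
    gamma2t (K (n + 1) □ K (m + 1)) ≤ gamma2t (K n □ K m) + 2 := by
  have hneBig : {k | ∃ S : Set (Fin (n+1) × Fin (m+1)),
      TotalTwoDom (K (n+1) □ K (m+1)) S ∧ S.ncard = k}.Nonempty :=
    ⟨(Set.univ : Set (Fin (n+1) × Fin (m+1))).ncard,
      Set.univ, RookAux.tdom_univ (by omega) (by omega), rfl⟩
  have hneSmall : {k | ∃ S : Set (Fin n × Fin m),
      TotalTwoDom (K n □ K m) S ∧ S.ncard = k}.Nonempty :=
    ⟨(Set.univ : Set (Fin n × Fin m)).ncard,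
      Set.univ, RookAux.tdom_univ hn hm, rfl⟩
  constructor
  · obtain ⟨S', hS', hcard⟩ := Nat.sInf_mem hneBig
    obtain ⟨S, hS, hle⟩ := RookAux.lower hn hm S' hS'
    have h1 : gamma2t (K n □ K m) ≤ S.ncard := Nat.sInf_le ⟨S, hS, rfl⟩
    have h2 : S'.ncard = gamma2t (K (n+1) □ K (m+1)) := hcard
    omega
  · obtain ⟨S, hS, hcard⟩ := Nat.sInf_mem hneSmall
    obtain ⟨S', hS', hle⟩ := RookAux.upper hn hm S hS
    have h1 : gamma2t (K (n+1) □ K (m+1)) ≤ S'.ncard := Nat.sInf_le ⟨S', hS', rfl⟩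
    have h2 : S.ncard = gamma2t (K n □ K m) := hcard
    omega
end

section
/- For all integers 3 ≤ n ≤ m, γ_{2t}(K_n □ K_n) ≤ γ_{2t}(K_n □ K_m) ≤ min{2n, γ_{2t}(K_n □ K_n) + (m − n)}. -/
open SimpleGraph

lemma adjKK {n m : ℕ} (v u : Fin n × Fin m) : (K n □ K m).Adj v u ↔ (v.1 ≠ u.1 ∧ v.2 = u.2) ∨ (v.2 ≠ u.2 ∧ v.1 = u.1) := by
  simp [K, boxProd_adj, and_comm]

lemma two_le_ncard {α : Type*} [Fintype α] {s : Set α} {a b : α} (ha : a ∈ s) (hb : b ∈ s) (h : a ≠ b) : 2 ≤ s.ncard :=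
  (Set.one_lt_ncard_iff s.toFinite).mpr ⟨a, b, ha, hb, h⟩

lemma exists_pair {α : Type*} [Fintype α] {s : Set α} (h : 2 ≤ s.ncard) : ∃ a ∈ s, ∃ b ∈ s, a ≠ b := by
  obtain ⟨a,b,ha,hb,hab⟩ := (Set.one_lt_ncard_iff s.toFinite).mp h
  exact ⟨a, ha, b, hb, hab⟩

lemma three_le_ncard {α : Type*} [Fintype α] {s : Set α} {a b c : α} (ha : a ∈ s) (hb : b ∈ s) (hc : c ∈ s)
    (hab : a ≠ b) (hac : a ≠ c) (hbc : b ≠ c) : 3 ≤ s.ncard := by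
  have h1 : ({a,b,c} : Set α).ncard = 3 := by
    rw [Set.ncard_insert_of_notMem (by simp [hab, hac]) (Set.toFinite _), Set.ncard_pair hbc]
  calc 3 = ({a,b,c} : Set α).ncard := h1.symm
    _ ≤ s.ncard := Set.ncard_le_ncard (by intro x hx; rcases hx with h|h|h <;> simp_all) s.toFinite

lemma ncard_eq_sum_fibers {α β : Type*} [Fintype α] [Fintype β] [DecidableEq β] (S : Set α) (f : α → β) :
    S.ncard = ∑ b : β, (S ∩ f ⁻¹' {b}).ncard := by
  classical
  rw [Set.ncard_eq_toFinset_card S S.toFinite]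
  rw [Finset.card_eq_sum_card_fiberwise (f := f) (t := Finset.univ) (fun x _ => Finset.mem_univ _)]
  refine Finset.sum_congr rfl fun b _ => ?_
  rw [Set.ncard_eq_toFinset_card _ (S ∩ f ⁻¹' {b}).toFinite]
  congr 1
  ext x
  simp [Set.Finite.mem_toFinset]

/-- The two-column construction. -/
lemma lemA {n m : ℕ} (hn : 2 ≤ n) (hm : 2 ≤ m) :
    ∃ S : Set (Fin n × Fin m), TotalTwoDom (K n □ K m) S ∧ S.ncard ≤ 2 * n := by
  have c0 : Fin m := ⟨0, by omega⟩
  set c0 : Fin m := ⟨0, by omega⟩ with hc0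
  set c1 : Fin m := ⟨1, by omega⟩ with hc1
  have hc01 : c0 ≠ c1 := by simp [hc0, hc1, Fin.ext_iff]
  set S := (fun a : Fin n => (a, c0)) '' Set.univ ∪ (fun a : Fin n => (a, c1)) '' Set.univ with hSdef
  have hm0 : ∀ a : Fin n, (a, c0) ∈ S := fun a => Or.inl ⟨a, trivial, rfl⟩
  have hm1 : ∀ a : Fin n, (a, c1) ∈ S := fun a => Or.inr ⟨a, trivial, rfl⟩
  refine ⟨S, ?_, ?_⟩
  · rintro ⟨i, j⟩
    set i' : Fin n := if i = ⟨0, by omega⟩ then ⟨1, by omega⟩ else ⟨0, by omega⟩ with hi'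
    have hii' : i ≠ i' := by
      simp only [hi']
      split
      · next h => subst h; simp [Fin.ext_iff]
      · next h => exact fun hh => h hh
    by_cases h0 : j = c0
    · subst h0
      refine two_le_ncard (a := (i', c0)) (b := (i, c1))
        ⟨hm0 i', by rw [Set.mem_setOf_eq, adjKK]; exact Or.inl ⟨hii'.symm ∘ Eq.symm, rfl⟩⟩
        ⟨hm1 i, by rw [Set.mem_setOf_eq, adjKK]; exact Or.inr ⟨hc01, rfl⟩⟩ ?_
      · intro h; injection h with h1 h2; exact hii' h1.symm
    · by_cases h1 : j = c1
      · subst h1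
        refine two_le_ncard (a := (i', c1)) (b := (i, c0))
          ⟨hm1 i', by rw [Set.mem_setOf_eq, adjKK]; exact Or.inl ⟨hii'.symm ∘ Eq.symm, rfl⟩⟩
          ⟨hm0 i, by rw [Set.mem_setOf_eq, adjKK]; exact Or.inr ⟨Ne.symm hc01, rfl⟩⟩ ?_
        · intro h; injection h with h1 h2; exact hii' h1.symm
      · refine two_le_ncard (a := (i, c0)) (b := (i, c1))
          ⟨hm0 i, by rw [Set.mem_setOf_eq, adjKK]; exact Or.inr ⟨h0, rfl⟩⟩
          ⟨hm1 i, by rw [Set.mem_setOf_eq, adjKK]; exact Or.inr ⟨h1, rfl⟩⟩ ?_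
        · intro h; injection h with h1 h2; exact hc01 h2
  · calc S.ncard ≤ ((fun a : Fin n => (a, c0)) '' Set.univ).ncard + ((fun a : Fin n => (a, c1)) '' Set.univ).ncard :=
        Set.ncard_union_le _ _
    _ ≤ 2 * n := by
        rw [Set.ncard_image_of_injective _ (fun a b h => by injection h),
          Set.ncard_image_of_injective _ (fun a b h => by injection h)]
        simp [Set.ncard_univ]; omega

lemma gamma_le {n m : ℕ} (S : Set (Fin n × Fin m)) (hS : TotalTwoDom (K n □ K m) S) :
    gamma2t (K n □ K m) ≤ S.ncard := Nat.sInf_le ⟨S, hS, rfl⟩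

lemma gammaSet_nonempty {n m : ℕ} (hn : 2 ≤ n) (hm : 2 ≤ m) :
    {k | ∃ S : Set (Fin n × Fin m), TotalTwoDom (K n □ K m) S ∧ S.ncard = k}.Nonempty := by
  obtain ⟨S, hS, _⟩ := lemA hn hm
  exact ⟨S.ncard, S, hS, rfl⟩

lemma gamma_le_2n {n m : ℕ} (hn : 2 ≤ n) (hm : 2 ≤ m) : gamma2t (K n □ K m) ≤ 2 * n := by
  obtain ⟨S, hS, hc⟩ := lemA hn hm
  exact le_trans (gamma_le S hS) hc

/-- Column deletion: if a column is empty and domination holds off that column. -/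
lemma lemR {n m : ℕ} (S : Set (Fin n × Fin (m+1))) (j0 : Fin (m+1))
    (hcol : ∀ p ∈ S, p.2 ≠ j0)
    (hdom : ∀ v : Fin n × Fin (m+1), v.2 ≠ j0 → 2 ≤ (S ∩ {u | (K n □ K (m+1)).Adj v u}).ncard) :
    ∃ T : Set (Fin n × Fin m), TotalTwoDom (K n □ K m) T ∧ T.ncard ≤ S.ncard := by
  set φ : Fin n × Fin m → Fin n × Fin (m+1) := fun p => (p.1, j0.succAbove p.2) with hφ
  have hφinj : Function.Injective φ := by
    intro a b h
    injection h with h1 h2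
    exact Prod.ext h1 (j0.succAbove_right_injective h2)
  refine ⟨φ ⁻¹' S, ?_, ?_⟩
  · rintro ⟨i, j⟩
    have hne : j0.succAbove j ≠ j0 := Fin.succAbove_ne j0 j
    obtain ⟨x, hx, y, hy, hxy⟩ := exists_pair (hdom (i, j0.succAbove j) hne)
    obtain ⟨hxS, hxA⟩ := hx
    obtain ⟨hyS, hyA⟩ := hy
    rw [Set.mem_setOf_eq, adjKK] at hxA hyA
    obtain ⟨x2, hx2⟩ := Fin.exists_succAbove_eq (hcol x hxS)
    obtain ⟨y2, hy2⟩ := Fin.exists_succAbove_eq (hcol y hyS)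
    have hxmem : (x.1, x2) ∈ φ ⁻¹' S := by
      simp only [Set.mem_preimage, hφ, hx2]; exact hxS
    have hymem : (y.1, y2) ∈ φ ⁻¹' S := by
      simp only [Set.mem_preimage, hφ, hy2]; exact hyS
    refine two_le_ncard (a := (x.1, x2)) (b := (y.1, y2)) ⟨hxmem, ?_⟩ ⟨hymem, ?_⟩ ?_
    · rw [Set.mem_setOf_eq, adjKK]
      rcases hxA with ⟨h1, h2⟩ | ⟨h1, h2⟩
      · exact Or.inl ⟨h1, j0.succAbove_right_injective (hx2 ▸ h2)⟩
      · exact Or.inr ⟨fun hh => h1 (hx2 ▸ congrArg j0.succAbove hh), h2⟩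
    · rw [Set.mem_setOf_eq, adjKK]
      rcases hyA with ⟨h1, h2⟩ | ⟨h1, h2⟩
      · exact Or.inl ⟨h1, j0.succAbove_right_injective (hy2 ▸ h2)⟩
      · exact Or.inr ⟨fun hh => h1 (hy2 ▸ congrArg j0.succAbove hh), h2⟩
    · intro h
      injection h with h1 h2
      exact hxy (Prod.ext h1 (by rw [← hx2, ← hy2, h2]))
  · have : φ '' (φ ⁻¹' S) ⊆ S := Set.image_preimage_subset φ S
    calc (φ ⁻¹' S).ncard = (φ '' (φ ⁻¹' S)).ncard := (Set.ncard_image_of_injective _ hφinj).symm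
      _ ≤ S.ncard := Set.ncard_le_ncard this S.toFinite


/-- Induction step for monotonicity. -/
lemma lemCstep {n m : ℕ} (hn : 3 ≤ n) (hm : n ≤ m) (S : Set (Fin n × Fin (m+1)))
    (hS : TotalTwoDom (K n □ K (m+1)) S) :
    gamma2t (K n □ K m) ≤ S.ncard := by
  classical
  by_cases hall : ∀ j : Fin (m+1), 2 ≤ (S ∩ Prod.snd ⁻¹' {j}).ncard
  · have hsum : S.ncard = ∑ j : Fin (m+1), (S ∩ Prod.snd ⁻¹' {j}).ncard := ncard_eq_sum_fibers S Prod.snd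
    have h1 : 2 * (m+1) ≤ S.ncard := by
      rw [hsum]
      calc 2 * (m+1) = ∑ _j : Fin (m+1), 2 := by simp [mul_comm]
        _ ≤ _ := Finset.sum_le_sum (fun j _ => hall j)
    have h2 := gamma_le_2n (n := n) (m := m) (by omega) (by omega)
    omega
  · push_neg at hall
    obtain ⟨j0, hj0⟩ := hall
    rcases (Set.ncard_le_one_iff_eq (s := S ∩ Prod.snd ⁻¹' {j0}) (Set.toFinite _)).mp (by omega) with hemp | ⟨e, he⟩
    · obtain ⟨T, hTdom, hTcard⟩ := lemR S j0
        (fun p hp hpj => (Set.eq_empty_iff_forall_notMem.mp hemp p) ⟨hp, hpj⟩)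
        (fun v _ => hS v)
      exact le_trans (gamma_le T hTdom) hTcard
    · have hee : e ∈ S ∩ Prod.snd ⁻¹' {j0} := by rw [he]; exact rfl
      have heS : e ∈ S := hee.1
      have hej0 : e.2 = j0 := hee.2
      obtain ⟨x, ⟨hxS, hxA⟩, y, ⟨hyS, hyA⟩, hxy⟩ := exists_pair (hS e)
      rw [Set.mem_setOf_eq, adjKK] at hxA hyA
      have hcolx : ∀ z : Fin n × Fin (m+1), z ∈ S → z.2 = e.2 → z = e := by
        intro z hz hz2
        have : z ∈ S ∩ Prod.snd ⁻¹' {j0} := ⟨hz, by simp [hz2, hej0]⟩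
        rwa [he] at this
      have hx1 : e.1 = x.1 ∧ e.2 ≠ x.2 := by
        rcases hxA with ⟨h1, h2⟩ | ⟨h1, h2⟩
        · exact absurd (hcolx x hxS h2.symm) (fun hh => h1 (hh ▸ rfl))
        · exact ⟨h2, h1⟩
      have hy1 : e.1 = y.1 ∧ e.2 ≠ y.2 := by
        rcases hyA with ⟨h1, h2⟩ | ⟨h1, h2⟩
        · exact absurd (hcolx y hyS h2.symm) (fun hh => h1 (hh ▸ rfl))
        · exact ⟨h2, h1⟩
      have hxyne : x.2 ≠ y.2 := fun hh => hxy (Prod.ext (hx1.1 ▸ hy1.1 ▸ rfl) hh)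
      have henadj : ∀ v : Fin n × Fin (m+1), v.1 ≠ e.1 → v.2 ≠ j0 → ¬ (K n □ K (m+1)).Adj v e := by
        intro v h1 h2 hadj
        rw [adjKK] at hadj
        rcases hadj with ⟨_, hh⟩ | ⟨_, hh⟩
        · exact h2 (hh ▸ hej0)
        · exact h1 hh
      by_cases hfull : ∀ c : Fin (m+1), (e.1, c) ∈ S
      · -- row of e is full: just delete e
        have hdom' : ∀ v : Fin n × Fin (m+1), v.2 ≠ j0 →
            2 ≤ ((S \ {e}) ∩ {u | (K n □ K (m+1)).Adj v u}).ncard := by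
          rintro ⟨i, j⟩ hj
          by_cases hi : i = e.1
          · subst hi
            have hcard2 : 2 ≤ (Finset.univ \ {j, j0} : Finset (Fin (m+1))).card := by
              have h1 : ({j, j0} : Finset (Fin (m+1))).card ≤ 2 :=
                le_trans (Finset.card_insert_le _ _) (by simp)
              have h2 := Finset.card_sdiff_of_subset (Finset.subset_univ ({j, j0} : Finset (Fin (m+1))))
              rw [Finset.card_univ, Fintype.card_fin] at h2
              omega
            obtain ⟨c1, hc1, c2, hc2, hc12⟩ := Finset.one_lt_card.mp hcard2
            simp only [Finset.mem_sdiff, Finset.mem_insert, Finset.mem_singleton, not_or] at hc1 hc2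
            refine two_le_ncard (a := (e.1, c1)) (b := (e.1, c2))
              ⟨⟨hfull c1, fun hh => hc1.2.2 ((congrArg Prod.snd hh).trans hej0)⟩, ?_⟩
              ⟨⟨hfull c2, fun hh => hc2.2.2 ((congrArg Prod.snd hh).trans hej0)⟩, ?_⟩
              (fun hh => hc12 (congrArg Prod.snd hh))
            · rw [Set.mem_setOf_eq, adjKK]
              exact Or.inr ⟨fun hh => hc1.2.1 hh.symm, rfl⟩
            · rw [Set.mem_setOf_eq, adjKK]
              exact Or.inr ⟨fun hh => hc2.2.1 hh.symm, rfl⟩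
          · obtain ⟨x', ⟨hx'S, hx'A⟩, y', ⟨hy'S, hy'A⟩, hx'y'⟩ := exists_pair (hS (i, j))
            have hx'e : x' ≠ e := fun hh => henadj (i,j) hi hj (by rw [← hh]; exact hx'A)
            have hy'e : y' ≠ e := fun hh => henadj (i,j) hi hj (by rw [← hh]; exact hy'A)
            exact two_le_ncard ⟨⟨hx'S, hx'e⟩, hx'A⟩ ⟨⟨hy'S, hy'e⟩, hy'A⟩ hx'y'
        obtain ⟨T, hTdom, hTcard⟩ := lemR (S \ {e}) j0
          (fun p hp hpj => hp.2 (hcolx p hp.1 (hpj.trans hej0.symm))) hdom'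
        exact le_trans (gamma_le T hTdom) (le_trans hTcard (Set.ncard_le_ncard Set.diff_subset S.toFinite))
      · push_neg at hfull
        obtain ⟨b1, hb1⟩ := hfull
        have hb1j0 : b1 ≠ j0 := by
          intro hh
          apply hb1
          have he2 : e = (e.1, b1) := Prod.ext rfl (hej0.trans hh.symm)
          rw [← he2]; exact heS
        have hbx : b1 ≠ x.2 := by
          intro hh
          apply hb1
          rw [hh, hx1.1, Prod.mk.eta]
          exact hxS
        have hby : b1 ≠ y.2 := by
          intro hh
          apply hb1
          rw [hh, hy1.1, Prod.mk.eta]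
          exact hyS
        have hcol' : ∀ p ∈ insert (e.1, b1) (S \ {e}), p.2 ≠ j0 := by
          rintro p hp
          rcases hp with hh | ⟨hpS, hpe⟩
          · rw [hh]; exact hb1j0
          · exact fun hpj => hpe (hcolx p hpS (hpj.trans hej0.symm))
        have hdom' : ∀ v : Fin n × Fin (m+1), v.2 ≠ j0 →
            2 ≤ ((insert (e.1, b1) (S \ {e})) ∩ {u | (K n □ K (m+1)).Adj v u}).ncard := by
          rintro ⟨i, j⟩ hj
          by_cases hi : i = e.1
          · subst hi
            have hxT : x ∈ insert (e.1, b1) (S \ {e}) :=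
              Or.inr ⟨hxS, fun hh => hx1.2 (congrArg Prod.snd hh).symm⟩
            have hyT : y ∈ insert (e.1, b1) (S \ {e}) :=
              Or.inr ⟨hyS, fun hh => hy1.2 (congrArg Prod.snd hh).symm⟩
            have hbT : (e.1, b1) ∈ insert (e.1, b1) (S \ {e}) := Or.inl rfl
            by_cases hjx : j = x.2
            · refine two_le_ncard ⟨hyT, ?_⟩ ⟨hbT, ?_⟩ ?_
              · rw [Set.mem_setOf_eq, adjKK]
                exact Or.inr ⟨fun hh => hxyne (hjx ▸ hh), hy1.1⟩
              · rw [Set.mem_setOf_eq, adjKK]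
                exact Or.inr ⟨fun hh => hbx (hh.symm.trans hjx), rfl⟩
              · exact fun hh => hby (congrArg Prod.snd hh).symm
            · by_cases hjy : j = y.2
              · refine two_le_ncard ⟨hxT, ?_⟩ ⟨hbT, ?_⟩ ?_
                · rw [Set.mem_setOf_eq, adjKK]
                  exact Or.inr ⟨hjx, hx1.1⟩
                · rw [Set.mem_setOf_eq, adjKK]
                  exact Or.inr ⟨fun hh => hby (hh.symm.trans hjy), rfl⟩
                · exact fun hh => hbx (congrArg Prod.snd hh).symm
              · refine two_le_ncard ⟨hxT, ?_⟩ ⟨hyT, ?_⟩ hxy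
                · rw [Set.mem_setOf_eq, adjKK]
                  exact Or.inr ⟨hjx, hx1.1⟩
                · rw [Set.mem_setOf_eq, adjKK]
                  exact Or.inr ⟨hjy, hy1.1⟩
          · obtain ⟨x', ⟨hx'S, hx'A⟩, y', ⟨hy'S, hy'A⟩, hx'y'⟩ := exists_pair (hS (i, j))
            have hx'e : x' ≠ e := fun hh => henadj (i,j) hi hj (by rw [← hh]; exact hx'A)
            have hy'e : y' ≠ e := fun hh => henadj (i,j) hi hj (by rw [← hh]; exact hy'A)
            exact two_le_ncard (a := x') (b := y')
              ⟨Or.inr ⟨hx'S, hx'e⟩, hx'A⟩ ⟨Or.inr ⟨hy'S, hy'e⟩, hy'A⟩ hx'y'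


        obtain ⟨T, hTdom, hTcard⟩ := lemR (insert (e.1, b1) (S \ {e})) j0 hcol' hdom'
        refine le_trans (gamma_le T hTdom) (le_trans hTcard ?_)
        have h1 : (insert (e.1, b1) (S \ {e})).ncard ≤ (S \ {e}).ncard + 1 := Set.ncard_insert_le _ _
        have h2 : (S \ {e}).ncard = S.ncard - 1 := Set.ncard_diff_singleton_of_mem heS
        have h3 : 0 < S.ncard := (Set.ncard_pos (s := S) (Set.toFinite _)).mpr ⟨e, heS⟩
        omega

lemma lemC {n : ℕ} (hn : 3 ≤ n) : ∀ m, n ≤ m → gamma2t (K n □ K n) ≤ gamma2t (K n □ K m) := by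
  intro m
  induction m with
  | zero => intro h; omega
  | succ m ih =>
    intro h
    rcases Nat.lt_or_ge n (m+1) with hlt | hge
    · have hnm : n ≤ m := by omega
      obtain ⟨S, hSdom, hScard⟩ := Nat.sInf_mem (gammaSet_nonempty (n := n) (m := m+1) (by omega) (by omega))
      exact le_trans (ih hnm) (le_trans (lemCstep hn hnm S hSdom) (le_of_eq hScard))
    · have : n = m + 1 := by omega
      subst this; rfl

/-- The extension construction bound. -/
lemma lemB {n m : ℕ} (hn : 3 ≤ n) (hnm : n ≤ m) :
    gamma2t (K n □ K m) ≤ gamma2t (K n □ K n) + (m - n) := by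
  classical
  by_cases hcase : 2*n ≤ gamma2t (K n □ K n) + (m - n)
  · exact le_trans (gamma_le_2n (by omega) (by omega)) hcase
  push_neg at hcase
  obtain ⟨S, hSdom, hScard⟩ := Nat.sInf_mem (gammaSet_nonempty (n := n) (m := n) (by omega) (by omega))
  have hγ : S.ncard = gamma2t (K n □ K n) := hScard
  have hSlt : S.ncard < 2*n := by omega
  -- Claim 1: every row of S is nonempty
  have hrow : ∀ i : Fin n, ∃ a, (i, a) ∈ S := by
    intro i
    by_contra hemptyrow
    push_neg at hemptyrow
    have hcols : ∀ j : Fin n, 2 ≤ (S ∩ Prod.snd ⁻¹' {j}).ncard := by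
      intro j
      obtain ⟨x, ⟨hxS, hxA⟩, y, ⟨hyS, hyA⟩, hxy⟩ := exists_pair (hSdom (i, j))
      rw [Set.mem_setOf_eq, adjKK] at hxA hyA
      have hx2 : x.2 = j := by
        rcases hxA with ⟨h1, h2⟩ | ⟨h1, h2⟩
        · exact h2.symm
        · exact absurd (show (i, x.2) ∈ S by rw [show i = x.1 from h2, Prod.mk.eta]; exact hxS) (hemptyrow x.2)
      have hy2 : y.2 = j := by
        rcases hyA with ⟨h1, h2⟩ | ⟨h1, h2⟩
        · exact h2.symm
        · exact absurd (show (i, y.2) ∈ S by rw [show i = y.1 from h2, Prod.mk.eta]; exact hyS) (hemptyrow y.2)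
      exact two_le_ncard ⟨hxS, hx2⟩ ⟨hyS, hy2⟩ hxy
    have hsum := ncard_eq_sum_fibers S Prod.snd
    have h2n : 2*n ≤ S.ncard := by
      rw [hsum]
      calc 2*n = ∑ _j : Fin n, 2 := by simp [mul_comm]
        _ ≤ _ := Finset.sum_le_sum (fun j _ => hcols j)
    omega
  -- Claim 2: some row has two elements
  have hrow2 : ∃ i : Fin n, ∃ a b : Fin n, a ≠ b ∧ (i, a) ∈ S ∧ (i, b) ∈ S := by
    by_contra hno
    push_neg at hno
    set i0 : Fin n := ⟨0, by omega⟩ with hi0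
    obtain ⟨a0, ha0⟩ := hrow i0
    obtain ⟨x, ⟨hxS, hxA⟩, y, ⟨hyS, hyA⟩, hxy⟩ := exists_pair (hSdom (i0, a0))
    rw [Set.mem_setOf_eq, adjKK] at hxA hyA
    have hx' : x.1 ≠ i0 ∧ x.2 = a0 := by
      rcases hxA with ⟨h1, h2⟩ | ⟨h1, h2⟩
      · exact ⟨fun hh => h1 hh.symm, h2.symm⟩
      · exact absurd (show (i0, x.2) ∈ S by rw [show i0 = x.1 from h2, Prod.mk.eta]; exact hxS)
          (hno i0 a0 x.2 h1 ha0)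
    have hy' : y.1 ≠ i0 ∧ y.2 = a0 := by
      rcases hyA with ⟨h1, h2⟩ | ⟨h1, h2⟩
      · exact ⟨fun hh => h1 hh.symm, h2.symm⟩
      · exact absurd (show (i0, y.2) ∈ S by rw [show i0 = y.1 from h2, Prod.mk.eta]; exact hyS)
          (hno i0 a0 y.2 h1 ha0)
    have h3 : 3 ≤ (S ∩ Prod.snd ⁻¹' {a0}).ncard := by
      refine three_le_ncard (a := (i0, a0)) (b := x) (c := y) ⟨ha0, rfl⟩ ⟨hxS, hx'.2⟩ ⟨hyS, hy'.2⟩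
        (fun hh => hx'.1 (congrArg Prod.fst hh).symm)
        (fun hh => hy'.1 (congrArg Prod.fst hh).symm) hxy
    have h1 : ∀ j : Fin n, 1 ≤ (S ∩ Prod.snd ⁻¹' {j}).ncard := by
      intro j
      by_cases hja : j = a0
      · subst hja; omega
      · obtain ⟨x', ⟨hx'S, hx'A⟩, y', ⟨hy'S, hy'A⟩, hx'y'⟩ := exists_pair (hSdom (i0, j))
        rw [Set.mem_setOf_eq, adjKK] at hx'A hy'A
        have key : ∀ z : Fin n × Fin n, z ∈ S →
            ((i0 ≠ z.1 ∧ j = z.2) ∨ (j ≠ z.2 ∧ i0 = z.1)) → z.2 = j ∨ z = (i0, a0) := by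
          intro z hzS hzA
          rcases hzA with ⟨h1', h2'⟩ | ⟨h1', h2'⟩
          · exact Or.inl h2'.symm
          · by_cases hza : z.2 = a0
            · exact Or.inr (Prod.ext h2'.symm hza)
            · exact absurd (show (i0, z.2) ∈ S by rw [show i0 = z.1 from h2', Prod.mk.eta]; exact hzS)
                (hno i0 a0 z.2 (fun hh => hza hh.symm) ha0)
        rcases key x' hx'S hx'A with hh | hh
        · exact (Set.ncard_pos (Set.toFinite _)).mpr ⟨x', hx'S, hh⟩
        · rcases key y' hy'S hy'A with hh2 | hh2
          · exact (Set.ncard_pos (Set.toFinite _)).mpr ⟨y', hy'S, hh2⟩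
          · exact absurd (hh.trans hh2.symm) hx'y'
    -- row sums ≤ n
    have hrowle : ∀ i : Fin n, (S ∩ Prod.fst ⁻¹' {i}).ncard ≤ 1 := by
      intro i
      by_contra hgt
      push_neg at hgt
      obtain ⟨u, ⟨huS, hu1⟩, w, ⟨hwS, hw1⟩, huw⟩ := exists_pair hgt
      have hu1' : u.1 = i := hu1
      have hw1' : w.1 = i := hw1
      have hne : u.2 ≠ w.2 := fun hh => huw (Prod.ext (hu1'.trans hw1'.symm) hh)
      exact hno i u.2 w.2 hne
        (by rw [← hu1', Prod.mk.eta]; exact huS)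
        (by rw [← hw1', Prod.mk.eta]; exact hwS)
    have hsumr := ncard_eq_sum_fibers S Prod.fst
    have hler : S.ncard ≤ n := by
      rw [hsumr]
      calc ∑ i : Fin n, (S ∩ Prod.fst ⁻¹' {i}).ncard ≤ ∑ _i : Fin n, 1 :=
          Finset.sum_le_sum (fun i _ => hrowle i)
        _ = n := by simp
    have hsumc := ncard_eq_sum_fibers S Prod.snd
    have hgec : n + 2 ≤ S.ncard := by
      have hsplit : (S ∩ Prod.snd ⁻¹' {a0}).ncard
          + ∑ j ∈ Finset.univ.erase a0, (S ∩ Prod.snd ⁻¹' {j}).ncard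
          = ∑ j : Fin n, (S ∩ Prod.snd ⁻¹' {j}).ncard :=
        Finset.add_sum_erase Finset.univ (fun j => (S ∩ Prod.snd ⁻¹' {j}).ncard) (Finset.mem_univ a0)
      have herase : (n - 1) * 1 ≤ ∑ j ∈ Finset.univ.erase a0, (S ∩ Prod.snd ⁻¹' {j}).ncard := by
        have hcard : (Finset.univ.erase a0).card = n - 1 := by
          rw [Finset.card_erase_of_mem (Finset.mem_univ a0), Finset.card_univ, Fintype.card_fin]
        calc (n-1) * 1 = (Finset.univ.erase a0).card • 1 := by rw [hcard, smul_eq_mul]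
          _ ≤ _ := Finset.card_nsmul_le_sum _ _ _ (fun j _ => h1 j)
      omega
    omega
  obtain ⟨istar, a, b, hab, haS, hbS⟩ := hrow2
  -- the extension construction
  set φ : Fin n × Fin n → Fin n × Fin m := fun p => (p.1, Fin.castLE hnm p.2) with hφ
  have hφinj : Function.Injective φ := by
    intro p q h
    injection h with h1 h2
    exact Prod.ext h1 (Fin.castLE_injective hnm h2)
  set ψ : Fin (m - n) → Fin n × Fin m := fun k => (istar, ⟨n + k.1, by omega⟩) with hψ
  have hψinj : Function.Injective ψ := by
    intro p q h
    injection h with h1 h2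
    exact Fin.ext (by have := congrArg Fin.val h2; simpa using this)
  set S' : Set (Fin n × Fin m) := φ '' S ∪ ψ '' Set.univ with hS'
  have hdom' : TotalTwoDom (K n □ K m) S' := by
    rintro ⟨i, j⟩
    by_cases hj : j.1 < n
    · set j₀ : Fin n := ⟨j.1, hj⟩ with hj₀
      have hjeq : j = Fin.castLE hnm j₀ := Fin.ext rfl
      obtain ⟨x, ⟨hxS, hxA⟩, y, ⟨hyS, hyA⟩, hxy⟩ := exists_pair (hSdom (i, j₀))
      rw [Set.mem_setOf_eq, adjKK] at hxA hyA
      refine two_le_ncard (a := φ x) (b := φ y) ⟨Or.inl ⟨x, hxS, rfl⟩, ?_⟩ ⟨Or.inl ⟨y, hyS, rfl⟩, ?_⟩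
        (fun hh => hxy (hφinj hh))
      · rw [Set.mem_setOf_eq, adjKK, hjeq]
        rcases hxA with ⟨h1, h2⟩ | ⟨h1, h2⟩
        · exact Or.inl ⟨h1, congrArg (Fin.castLE hnm) h2⟩
        · exact Or.inr ⟨fun hh => h1 (Fin.castLE_injective hnm hh), h2⟩
      · rw [Set.mem_setOf_eq, adjKK, hjeq]
        rcases hyA with ⟨h1, h2⟩ | ⟨h1, h2⟩
        · exact Or.inl ⟨h1, congrArg (Fin.castLE hnm) h2⟩
        · exact Or.inr ⟨fun hh => h1 (Fin.castLE_injective hnm hh), h2⟩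
    · have hjn : n ≤ j.1 := by omega
      have hjA : (istar, j) ∈ S' := by
        refine Or.inr ⟨⟨j.1 - n, by omega⟩, trivial, ?_⟩
        simp only [hψ]
        exact Prod.ext rfl (Fin.ext (by simp; omega))
      by_cases hi : i = istar
      · subst hi
        refine two_le_ncard (a := φ (i, a)) (b := φ (i, b))
          ⟨Or.inl ⟨(i, a), haS, rfl⟩, ?_⟩ ⟨Or.inl ⟨(i, b), hbS, rfl⟩, ?_⟩
          (fun hh => hab (congrArg Prod.snd (hφinj hh)))
        · rw [Set.mem_setOf_eq, adjKK]
          exact Or.inr ⟨fun hh => by have := congrArg Fin.val hh; simp [hφ] at this; omega, rfl⟩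
        · rw [Set.mem_setOf_eq, adjKK]
          exact Or.inr ⟨fun hh => by have := congrArg Fin.val hh; simp [hφ] at this; omega, rfl⟩
      · obtain ⟨c, hc⟩ := hrow i
        refine two_le_ncard (a := (istar, j)) (b := φ (i, c)) ⟨hjA, ?_⟩ ⟨Or.inl ⟨(i, c), hc, rfl⟩, ?_⟩
          (fun hh => hi (congrArg Prod.fst hh).symm)
        · rw [Set.mem_setOf_eq, adjKK]
          exact Or.inl ⟨hi, rfl⟩
        · rw [Set.mem_setOf_eq, adjKK]
          exact Or.inr ⟨fun hh => by have := congrArg Fin.val hh; simp [hφ] at this; omega, rfl⟩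
  have hcard' : S'.ncard ≤ S.ncard + (m - n) := by
    calc S'.ncard ≤ (φ '' S).ncard + (ψ '' Set.univ).ncard := Set.ncard_union_le _ _
      _ = S.ncard + (m - n) := by
        rw [Set.ncard_image_of_injective _ hφinj, Set.ncard_image_of_injective _ hψinj]
        simp [Set.ncard_univ]
  exact le_trans (gamma_le S' hdom') (by omega)


theorem stmt_17 (n m : ℕ) (hn : 3 ≤ n) (hnm : n ≤ m) :
    gamma2t (K n □ K n) ≤ gamma2t (K n □ K m) ∧
    gamma2t (K n □ K m) ≤ min (2 * n) (gamma2t (K n □ K n) + (m - n)) := by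
  refine ⟨lemC hn m hnm, le_min (gamma_le_2n (by omega) (by omega)) (lemB hn hnm)⟩
end

section
/- For every integer n ≥ 2, γ_{2t}(K_n □ K_{n+1}) equals (3n+2)/2 if n is even and (3n+3)/2 if n is odd. -/
open SimpleGraph

lemma kadj {n : ℕ} (v u : Fin n × Fin (n+1)) :
    (K n □ K (n+1)).Adj v u ↔ (u.1 = v.1 ∨ u.2 = v.2) ∧ u ≠ v := by
  simp only [boxProd_adj, K, top_adj, ne_eq, Prod.ext_iff]
  tauto

instance kAdjDec {n : ℕ} : DecidableRel ((K n □ K (n+1)).Adj) :=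
  fun v u => decidable_of_iff _ (kadj v u).symm

open Finset in
lemma bridge {n : ℕ} (T : Finset (Fin n × Fin (n+1))) (v : Fin n × Fin (n+1)) :
    (T.filter fun u => u.1 = v.1).card + (T.filter fun u => u.2 = v.2).card =
      (T.filter fun u => (K n □ K (n+1)).Adj v u).card
        + 2 * (T.filter fun u => u = v).card := by
  classical
  have h1 : (T.filter fun u => u.1 = v.1) ∪ (T.filter fun u => u.2 = v.2)
      = (T.filter fun u => (K n □ K (n+1)).Adj v u) ∪ (T.filter fun u => u = v) := by
    rw [← filter_or, ← filter_or]
    apply filter_congr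
    intro u _
    rw [kadj]
    constructor
    · intro h
      by_cases hu : u = v
      · exact Or.inr hu
      · exact Or.inl ⟨h, hu⟩
    · rintro (⟨h, _⟩ | rfl)
      · exact h
      · exact Or.inl rfl
  have h2 : (T.filter fun u => u.1 = v.1) ∩ (T.filter fun u => u.2 = v.2)
      = T.filter fun u => u = v := by
    rw [← filter_and]
    apply filter_congr
    intro u _
    simp [Prod.ext_iff]
  have h3 : Disjoint (T.filter fun u => (K n □ K (n+1)).Adj v u) (T.filter fun u => u = v) := by
    rw [Finset.disjoint_left]
    intro a ha hb
    rw [mem_filter] at ha hb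
    exact (((kadj v a).1 ha.2).2) hb.2
  have := card_union_add_card_inter (T.filter fun u => u.1 = v.1) (T.filter fun u => u.2 = v.2)
  rw [h1, h2, card_union_of_disjoint h3] at this
  omega

open Finset in
lemma t2d_iff {n : ℕ} (T : Finset (Fin n × Fin (n+1))) :
    TotalTwoDom (K n □ K (n+1)) ↑T ↔
      ∀ v, 2 ≤ (T.filter fun u => (K n □ K (n+1)).Adj v u).card := by
  classical
  unfold TotalTwoDom
  have h : ∀ v : Fin n × Fin (n+1),
      ((↑T : Set _) ∩ {u | (K n □ K (n+1)).Adj v u}).ncard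
        = (T.filter fun u => (K n □ K (n+1)).Adj v u).card := by
    intro v
    rw [← Set.ncard_coe_finset]
    congr 1
    ext u
    simp
  exact forall_congr' fun v => by rw [h]

open Finset in
lemma ub_lemma {n : ℕ} (T : Finset (Fin n × Fin (n+1)))
    (h4 : ∀ v ∈ T, 4 ≤ (T.filter fun u => u.1 = v.1).card + (T.filter fun u => u.2 = v.2).card)
    (h2 : ∀ v, v ∉ T → 2 ≤ (T.filter fun u => u.1 = v.1).card + (T.filter fun u => u.2 = v.2).card) :
    TotalTwoDom (K n □ K (n+1)) ↑T := by
  classical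
  rw [t2d_iff]
  intro v
  have hb := bridge T v
  rw [filter_eq'] at hb
  by_cases hv : v ∈ T
  · have h := h4 v hv
    rw [if_pos hv, Finset.card_singleton] at hb
    omega
  · have h := h2 v hv
    rw [if_neg hv, Finset.card_empty] at hb
    omega

/-- weight function for the counting argument -/
def wt (t : ℕ) : ℕ := if t = 1 then 6 else if t = 2 then 3 else 2

lemma wt_add_le {x y : ℕ} (_hx : 1 ≤ x) (_hy : 1 ≤ y) (h : 4 ≤ x + y) : wt x + wt y ≤ 8 := by
  unfold wt; split_ifs <;> omega

lemma le_mul_wt {x : ℕ} (hx : 1 ≤ x) : 6 ≤ x * wt x := by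
  unfold wt; split_ifs <;> omega

open Finset in
lemma lb_lemma {n : ℕ} (hn : 2 ≤ n) (S : Set (Fin n × Fin (n+1)))
    (hS : TotalTwoDom (K n □ K (n+1)) S) : 3 * n + 2 ≤ 2 * S.ncard := by
  classical
  set T : Finset (Fin n × Fin (n+1)) := S.toFinset with hT
  have hST : S = ↑T := by simp [hT]
  rw [hST] at hS ⊢
  rw [Set.ncard_coe_finset]
  rw [t2d_iff] at hS
  set r : Fin n → ℕ := fun i => (T.filter fun u => u.1 = i).card with hr
  set c : Fin (n+1) → ℕ := fun j => (T.filter fun u => u.2 = j).card with hc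
  have hbr : ∀ v : Fin n × Fin (n+1), v ∈ T → 4 ≤ r v.1 + c v.2 := by
    intro v hv
    have hb := bridge T v
    rw [filter_eq', if_pos hv, card_singleton] at hb
    have := hS v
    simp only [hr, hc]
    omega
  have hbr2 : ∀ v : Fin n × Fin (n+1), 2 ≤ r v.1 + c v.2 := by
    intro v
    have hb := bridge T v
    rw [filter_eq'] at hb
    have := hS v
    simp only [hr, hc]
    split_ifs at hb with hv
    · rw [card_singleton] at hb; omega
    · rw [card_empty] at hb; omega
  have hkr : T.card = ∑ i : Fin n, r i :=
    card_eq_sum_card_fiberwise (f := Prod.fst) (fun x _ => mem_univ _)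
  have hkc : T.card = ∑ j : Fin (n+1), c j :=
    card_eq_sum_card_fiberwise (f := Prod.snd) (fun x _ => mem_univ _)
  by_cases hA : ∃ i, r i = 0
  · obtain ⟨i, hi⟩ := hA
    have hcj : ∀ j, 2 ≤ c j := fun j => by have := hbr2 (i, j); simpa [hi] using this
    have : ∑ j : Fin (n+1), 2 ≤ ∑ j : Fin (n+1), c j := sum_le_sum fun j _ => hcj j
    simp at this
    omega
  by_cases hB : ∃ j, c j = 0
  · obtain ⟨j, hj⟩ := hB
    have hri : ∀ i, 2 ≤ r i := fun i => by have := hbr2 (i, j); simpa [hj] using this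
    have : ∑ i : Fin n, 2 ≤ ∑ i : Fin n, r i := sum_le_sum fun i _ => hri i
    simp at this
    omega
  push_neg at hA hB
  have hR : ∀ i, 1 ≤ r i := fun i => Nat.one_le_iff_ne_zero.2 (hA i)
  have hC : ∀ j, 1 ≤ c j := fun j => Nat.one_le_iff_ne_zero.2 (hB j)
  -- sum of weights
  have hup : ∑ v ∈ T, (wt (r v.1) + wt (c v.2)) ≤ 8 * T.card := by
    calc ∑ v ∈ T, (wt (r v.1) + wt (c v.2)) ≤ ∑ _v ∈ T, 8 :=
          sum_le_sum fun v hv => wt_add_le (hR v.1) (hC v.2) (hbr v hv)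
      _ = 8 * T.card := by rw [sum_const, smul_eq_mul, Nat.mul_comm]
  have hrowsum : ∀ i : Fin n, ∑ v ∈ T.filter (fun u => u.1 = i), wt (r v.1) = r i * wt (r i) := by
    intro i
    rw [sum_congr rfl (fun v hv => by rw [(mem_filter.1 hv).2])]
    rw [sum_const, smul_eq_mul]
  have hcolsum : ∀ j : Fin (n+1), ∑ v ∈ T.filter (fun u => u.2 = j), wt (c v.2) = c j * wt (c j) := by
    intro j
    rw [sum_congr rfl (fun v hv => by rw [(mem_filter.1 hv).2])]
    rw [sum_const, smul_eq_mul]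
  have hlow1 : 6 * n ≤ ∑ v ∈ T, wt (r v.1) := by
    rw [← Finset.sum_fiberwise T Prod.fst (fun v => wt (r v.1))]
    calc (6 : ℕ) * n = ∑ _i : Fin n, 6 := by simp [Nat.mul_comm]
      _ ≤ _ := sum_le_sum fun i _ => by rw [hrowsum i]; exact le_mul_wt (hR i)
  have hlow2 : 6 * (n+1) ≤ ∑ v ∈ T, wt (c v.2) := by
    rw [← Finset.sum_fiberwise T Prod.snd (fun v => wt (c v.2))]
    calc (6 : ℕ) * (n+1) = ∑ _j : Fin (n+1), 6 := by simp [Nat.mul_comm]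
      _ ≤ _ := sum_le_sum fun j _ => by rw [hcolsum j]; exact le_mul_wt (hC j)
  rw [Finset.sum_add_distrib] at hup
  omega

open Finset in
lemma exists_T_two : ∃ T : Finset (Fin 2 × Fin 3),
    TotalTwoDom (K 2 □ K 3) ↑T ∧ T.card = 4 := by
  refine ⟨{(0,0),(0,1),(1,0),(1,1)}, ub_lemma _ ?_ ?_, by decide⟩ <;> decide

open Finset in
lemma exists_T_three : ∃ T : Finset (Fin 3 × Fin 4),
    TotalTwoDom (K 3 □ K 4) ↑T ∧ T.card = 6 := by
  refine ⟨Finset.univ.filter (fun v => v.1 = 0 ∨ v.2 = 0), ub_lemma _ ?_ ?_, by decide⟩ <;> decide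

open Finset in
lemma exists_T_big {n : ℕ} (hn : 4 ≤ n) : ∃ T : Finset (Fin n × Fin (n+1)),
    TotalTwoDom (K n □ K (n+1)) ↑T ∧ T.card = (3*n+3)/2 := by
  classical
  set m := n / 2 with hm
  set hc := m / 2 with hhc
  set hr := m - hc with hhr
  have hc1 : 1 ≤ hc := by omega
  have hr1 : 1 ≤ hr := by omega
  have hsum : hr + hc = m := by omega
  have hmn : m < n := by omega
  have hrow_cap : 3 * hr + hc ≤ n + 1 := by omega
  have hcol_cap : hr + 3 * hc ≤ n := by omega
  -- the two parts
  have hcol_lt : ∀ x : ℕ, (x - hr) % hc < n + 1 :=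
    fun x => lt_of_lt_of_le (Nat.mod_lt _ hc1) (by omega)
  have hrow_lt : ∀ x : ℕ, (x - hc) % hr < n :=
    fun x => lt_of_lt_of_le (Nat.mod_lt _ hr1) (by omega)
  set P1 : Finset (Fin n × Fin (n+1)) :=
    (univ.filter fun i : Fin n => hr ≤ i.1).image
      (fun i => (i, ⟨(i.1 - hr) % hc, hcol_lt i.1⟩)) with hP1
  set P2 : Finset (Fin n × Fin (n+1)) :=
    (univ.filter fun j : Fin (n+1) => hc ≤ j.1).image
      (fun j => (⟨(j.1 - hc) % hr, hrow_lt j.1⟩, j)) with hP2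
  set T : Finset (Fin n × Fin (n+1)) := P1 ∪ P2 with hT
  have hmem : ∀ v : Fin n × Fin (n+1), v ∈ T ↔
      (hr ≤ v.1.1 ∧ v.2.1 = (v.1.1 - hr) % hc) ∨ (hc ≤ v.2.1 ∧ v.1.1 = (v.2.1 - hc) % hr) := by
    intro v
    rw [hT, mem_union, hP1, hP2]
    constructor
    · rintro (h | h) <;> rw [mem_image] at h
      · obtain ⟨i, hi, hiv⟩ := h
        rw [mem_filter] at hi
        left
        rw [← hiv]
        exact ⟨hi.2, rfl⟩
      · obtain ⟨j, hj, hjv⟩ := h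
        rw [mem_filter] at hj
        right
        rw [← hjv]
        exact ⟨hj.2, rfl⟩
    · rintro (⟨h1, h2⟩ | ⟨h1, h2⟩)
      · left
        rw [mem_image]
        exact ⟨v.1, by simpa using h1, by
          ext
          · rfl
          · exact h2.symm⟩
      · right
        rw [mem_image]
        exact ⟨v.2, by simpa using h1, by
          ext
          · exact h2.symm
          · rfl⟩
  -- row counts
  have hrow3 : ∀ i : Fin n, i.1 < hr → 3 ≤ (T.filter fun u => u.1 = i).card := by
    intro i hi
    have key : ∀ (col : ℕ) (h : col < n+1), hc ≤ col → (col - hc) % hr = i.1 →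
        ((i, ⟨col, h⟩) : Fin n × Fin (n+1)) ∈ T.filter fun u => u.1 = i := by
      intro col h h1 h2
      rw [mem_filter]
      exact ⟨(hmem _).2 (Or.inr ⟨h1, h2.symm⟩), rfl⟩
    have m0 := key (hc + i.1) (by omega) (by omega)
      (by rw [show hc + i.1 - hc = i.1 by omega, Nat.mod_eq_of_lt hi])
    have m1 := key (hc + i.1 + hr) (by omega) (by omega)
      (by rw [show hc + i.1 + hr - hc = i.1 + 1 * hr by omega,
        Nat.add_mul_mod_self_right, Nat.mod_eq_of_lt hi])
    have m2 := key (hc + i.1 + 2 * hr) (by omega) (by omega)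
      (by rw [show hc + i.1 + 2 * hr - hc = i.1 + 2 * hr by omega,
        Nat.add_mul_mod_self_right, Nat.mod_eq_of_lt hi])
    have hsub : ({(i, ⟨hc + i.1, by omega⟩), (i, ⟨hc + i.1 + hr, by omega⟩),
        (i, ⟨hc + i.1 + 2 * hr, by omega⟩)} : Finset (Fin n × Fin (n+1)))
        ⊆ T.filter fun u => u.1 = i := by
      intro x hx
      simp only [mem_insert, mem_singleton] at hx
      rcases hx with rfl | rfl | rfl
      · exact m0
      · exact m1
      · exact m2
    calc (3 : ℕ) = ({(i, ⟨hc + i.1, by omega⟩), (i, ⟨hc + i.1 + hr, by omega⟩),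
          (i, ⟨hc + i.1 + 2 * hr, by omega⟩)} : Finset (Fin n × Fin (n+1))).card := by
            symm
            rw [card_eq_three]
            exact ⟨_, _, _, by simp [Prod.ext_iff, Fin.ext_iff]; omega,
              by simp [Prod.ext_iff, Fin.ext_iff]; omega,
              by simp [Prod.ext_iff, Fin.ext_iff]; omega, rfl⟩
      _ ≤ _ := card_le_card hsub
  have hrow1 : ∀ i : Fin n, hr ≤ i.1 → 1 ≤ (T.filter fun u => u.1 = i).card := by
    intro i hi
    refine card_pos.2 ⟨(i, ⟨(i.1 - hr) % hc, hcol_lt i.1⟩), ?_⟩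
    rw [mem_filter]
    exact ⟨(hmem _).2 (Or.inl ⟨hi, rfl⟩), rfl⟩
  have hcol3 : ∀ j : Fin (n+1), j.1 < hc → 3 ≤ (T.filter fun u => u.2 = j).card := by
    intro j hj
    have key : ∀ (row : ℕ) (h : row < n), hr ≤ row → (row - hr) % hc = j.1 →
        (((⟨row, h⟩ : Fin n), j) : Fin n × Fin (n+1)) ∈ T.filter fun u => u.2 = j := by
      intro row h h1 h2
      rw [mem_filter]
      exact ⟨(hmem _).2 (Or.inl ⟨h1, h2.symm⟩), rfl⟩
    have m0 := key (hr + j.1) (by omega) (by omega)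
      (by rw [show hr + j.1 - hr = j.1 by omega, Nat.mod_eq_of_lt hj])
    have m1 := key (hr + j.1 + hc) (by omega) (by omega)
      (by rw [show hr + j.1 + hc - hr = j.1 + 1 * hc by omega,
        Nat.add_mul_mod_self_right, Nat.mod_eq_of_lt hj])
    have m2 := key (hr + j.1 + 2 * hc) (by omega) (by omega)
      (by rw [show hr + j.1 + 2 * hc - hr = j.1 + 2 * hc by omega,
        Nat.add_mul_mod_self_right, Nat.mod_eq_of_lt hj])
    have hsub : ({((⟨hr + j.1, by omega⟩ : Fin n), j), ((⟨hr + j.1 + hc, by omega⟩ : Fin n), j),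
        ((⟨hr + j.1 + 2 * hc, by omega⟩ : Fin n), j)} : Finset (Fin n × Fin (n+1)))
        ⊆ T.filter fun u => u.2 = j := by
      intro x hx
      simp only [mem_insert, mem_singleton] at hx
      rcases hx with rfl | rfl | rfl
      · exact m0
      · exact m1
      · exact m2
    calc (3 : ℕ) = ({((⟨hr + j.1, by omega⟩ : Fin n), j), ((⟨hr + j.1 + hc, by omega⟩ : Fin n), j),
          ((⟨hr + j.1 + 2 * hc, by omega⟩ : Fin n), j)} : Finset (Fin n × Fin (n+1))).card := by
            symm
            rw [card_eq_three]
            exact ⟨_, _, _, by simp [Prod.ext_iff, Fin.ext_iff]; omega,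
              by simp [Prod.ext_iff, Fin.ext_iff]; omega,
              by simp [Prod.ext_iff, Fin.ext_iff]; omega, rfl⟩
      _ ≤ _ := card_le_card hsub
  have hcol1 : ∀ j : Fin (n+1), hc ≤ j.1 → 1 ≤ (T.filter fun u => u.2 = j).card := by
    intro j hj
    refine card_pos.2 ⟨(⟨(j.1 - hc) % hr, hrow_lt j.1⟩, j), ?_⟩
    rw [mem_filter]
    exact ⟨(hmem _).2 (Or.inr ⟨hj, rfl⟩), rfl⟩
  have hrany : ∀ i : Fin n, 1 ≤ (T.filter fun u => u.1 = i).card := by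
    intro i
    rcases lt_or_ge i.1 hr with h | h
    · exact le_trans (by norm_num) (hrow3 i h)
    · exact hrow1 i h
  have hcany : ∀ j : Fin (n+1), 1 ≤ (T.filter fun u => u.2 = j).card := by
    intro j
    rcases lt_or_ge j.1 hc with h | h
    · exact le_trans (by norm_num) (hcol3 j h)
    · exact hcol1 j h
  refine ⟨T, ub_lemma T ?_ ?_, ?_⟩
  · intro v hv
    rcases (hmem v).1 hv with ⟨h1, h2⟩ | ⟨h1, h2⟩
    · have hc3 := hcol3 v.2 (h2 ▸ Nat.mod_lt _ hc1)
      have := hrow1 v.1 h1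
      omega
    · have hr3 := hrow3 v.1 (h2 ▸ Nat.mod_lt _ hr1)
      have := hcol1 v.2 h1
      omega
  · intro v _
    have := hrany v.1
    have := hcany v.2
    omega
  · -- cardinality
    have hdisj : Disjoint P1 P2 := by
      rw [Finset.disjoint_left]
      intro a h1 h2
      rw [hP1, mem_image] at h1
      rw [hP2, mem_image] at h2
      obtain ⟨i, hi, hiv⟩ := h1
      obtain ⟨j, hj, hjv⟩ := h2
      rw [mem_filter] at hi
      have e1 : hr ≤ a.1.1 := by rw [← hiv]; exact hi.2
      have e2 : a.1.1 < hr := by rw [← hjv]; exact Nat.mod_lt _ hr1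
      omega
    rw [hT, card_union_of_disjoint hdisj, hP1, hP2]
    rw [card_image_of_injective _ (fun a b h => (Prod.ext_iff.1 h).1),
        card_image_of_injective _ (fun a b h => (Prod.ext_iff.1 h).2)]
    have e1 : (univ.filter fun i : Fin n => hr ≤ i.1) = Ici (⟨hr, by omega⟩ : Fin n) := by
      ext x
      simp [Fin.le_def]
    have e2 : (univ.filter fun j : Fin (n+1) => hc ≤ j.1) = Ici (⟨hc, by omega⟩ : Fin (n+1)) := by
      ext x
      simp [Fin.le_def]
    rw [e1, e2, Fin.card_Ici, Fin.card_Ici]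
    simp only
    omega

lemma exists_T {n : ℕ} (hn : 2 ≤ n) : ∃ T : Finset (Fin n × Fin (n+1)),
    TotalTwoDom (K n □ K (n+1)) ↑T ∧ T.card = (3*n+3)/2 := by
  match n, hn with
  | 2, _ => obtain ⟨T, h1, h2⟩ := exists_T_two; exact ⟨T, h1, by omega⟩
  | 3, _ => obtain ⟨T, h1, h2⟩ := exists_T_three; exact ⟨T, h1, by omega⟩
  | (k+4), _ => exact exists_T_big (by omega)

theorem stmt_18 (n : ℕ) (hn : 2 ≤ n) :
    (n % 2 = 0 → 2 * gamma2t (K n □ K (n + 1)) = 3 * n + 2) ∧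
    (n % 2 = 1 → 2 * gamma2t (K n □ K (n + 1)) = 3 * n + 3) := by
  obtain ⟨T, hT1, hT2⟩ := exists_T hn
  have hmemset : (3*n+3)/2 ∈ {k | ∃ S : Set (Fin n × Fin (n+1)),
      TotalTwoDom (K n □ K (n+1)) S ∧ S.ncard = k} :=
    ⟨↑T, hT1, by rw [Set.ncard_coe_finset, hT2]⟩
  have h1 : gamma2t (K n □ K (n+1)) ≤ (3*n+3)/2 := Nat.sInf_le hmemset
  have h2 : 3*n+2 ≤ 2 * gamma2t (K n □ K (n+1)) := by
    have hmem := Nat.sInf_mem ⟨_, hmemset⟩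
    obtain ⟨S, hS, hcard⟩ := hmem
    have hlb := lb_lemma hn S hS
    rw [hcard] at hlb
    exact hlb
  constructor <;> intro hp <;> omega
end

section
/- For every integer n ≥ 4, γ_{2t}(K_n □ K_{n+2}) equals (3n+4)/2 if n is even, (3n+3)/2 if n ≡ 1 (mod 4), and (3n+5)/2 if n ≡ 3 (mod 4). -/
open SimpleGraph

set_option maxHeartbeats 2000000

open Finset

lemma adj_iff {N M : ℕ} (v u : Fin N × Fin M) :
    (K N □ K M).Adj v u ↔ u ≠ v ∧ (u.1 = v.1 ∨ u.2 = v.2) := by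
  rw [boxProd_adj]
  constructor
  · rintro (⟨h1, h2⟩ | ⟨h1, h2⟩)
    · exact ⟨fun h => (K N).irrefl (h ▸ h1), Or.inr h2.symm⟩
    · exact ⟨fun h => (K M).irrefl (h ▸ h1), Or.inl h2.symm⟩
  · rintro ⟨hne, h | h⟩
    · refine Or.inr ⟨?_, h.symm⟩
      simp only [K, top_adj]
      exact fun h2 => hne (Prod.ext h h2.symm)
    · refine Or.inl ⟨?_, h.symm⟩
      simp only [K, top_adj]
      exact fun h2 => hne (Prod.ext h2.symm h)

lemma count_id {N M : ℕ} (F : Finset (Fin N × Fin M)) (v : Fin N × Fin M) :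
    (F.filter fun u => u ≠ v ∧ (u.1 = v.1 ∨ u.2 = v.2)).card + (if v ∈ F then 2 else 0)
      = (F.filter fun u => u.1 = v.1).card + (F.filter fun u => u.2 = v.2).card := by
  classical
  set A := F.filter fun u => u.1 = v.1 with hA
  set B := F.filter fun u => u.2 = v.2 with hB
  have h1 : F.filter (fun u => u ≠ v ∧ (u.1 = v.1 ∨ u.2 = v.2)) = (A ∪ B).erase v := by
    ext u
    simp only [hA, hB, mem_filter, mem_erase, mem_union]
    tauto
  have h2 : (A ∪ B).card + (A ∩ B).card = A.card + B.card :=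
    card_union_add_card_inter A B
  have h3 : A ∩ B = F.filter fun u => u = v := by
    ext u
    simp only [hA, hB, mem_inter, mem_filter, Prod.ext_iff]
    tauto
  have h4 : (F.filter fun u => u = v) = if v ∈ F then {v} else ∅ := filter_eq' F v
  by_cases hv : v ∈ F
  · have hvAB : v ∈ A ∪ B := by simp [hA, mem_union, mem_filter, hv]
    have h5 : ((A ∪ B).erase v).card = (A ∪ B).card - 1 := card_erase_of_mem hvAB
    have h6 : 1 ≤ (A ∪ B).card := card_pos.2 ⟨v, hvAB⟩
    rw [h1, h5]
    rw [h3, h4, if_pos hv] at h2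
    simp only [card_singleton] at h2
    simp [hv]
    omega
  · have hvAB : v ∉ A ∪ B := by
      simp only [hA, hB, mem_union, mem_filter]
      tauto
    rw [h1, erase_eq_of_notMem hvAB]
    rw [h3, h4, if_neg hv] at h2
    simp only [card_empty] at h2
    simp [hv]
    omega

lemma side {I J : Type*} [Fintype I] [Fintype J] [DecidableEq I] [DecidableEq J]
    (F : Finset (I × J)) (R : I → ℕ) (C : J → ℕ)
    (hR : ∀ i, R i = (F.filter fun u => u.1 = i).card)
    (hC : ∀ j, C j = (F.filter fun u => u.2 = j).card)
    (hpos : ∀ i, 1 ≤ R i)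
    (key4 : ∀ v ∈ F, 4 ≤ R v.1 + C v.2) :
    ∃ k Y : ℕ,
      3 * k ≤ Y ∧
      (univ.filter fun i => R i = 1).card + k ≤ Fintype.card I ∧
      Y + (univ.filter fun i => R i = 1).card
        + 2 * (Fintype.card I - (univ.filter fun i => R i = 1).card - k) ≤ F.card ∧
      (univ.filter fun j => C j = 1).card ≤ Y := by
  classical
  set a := (univ.filter fun i => R i = 1).card with ha
  set k := (univ.filter fun i => 3 ≤ R i).card with hk
  set Y := ∑ i ∈ univ.filter (fun i => 3 ≤ R i), R i with hY
  refine ⟨k, Y, ?_, ?_, ?_, ?_⟩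
  · have := Finset.card_nsmul_le_sum (univ.filter fun i => 3 ≤ R i) R 3
      (fun i hi => (mem_filter.1 hi).2)
    simpa [mul_comm] using this
  · have hdisj : Disjoint (univ.filter fun i => R i = 1) (univ.filter fun i => 3 ≤ R i) := by
      rw [Finset.disjoint_left]
      intro i h1 h3
      have e1 := (mem_filter.1 h1).2
      have e3 := (mem_filter.1 h3).2
      omega
    calc a + k = ((univ.filter fun i => R i = 1) ∪ (univ.filter fun i => 3 ≤ R i)).card :=
          (card_union_of_disjoint hdisj).symm
      _ ≤ (univ : Finset I).card := card_le_card (union_subset (filter_subset _ _) (filter_subset _ _))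
      _ = Fintype.card I := card_univ
  · have h0 : F.card = ∑ i, R i := by
      rw [Finset.card_eq_sum_card_fiberwise (f := Prod.fst) (t := univ) (fun u _ => mem_univ u.1)]
      exact Finset.sum_congr rfl fun i _ => (hR i).symm
    have hsplit : ∑ i ∈ univ.filter (fun i => 3 ≤ R i), R i
        + ∑ i ∈ univ.filter (fun i => ¬ 3 ≤ R i), R i = ∑ i, R i :=
      sum_filter_add_sum_filter_not univ _ R
    set Rest := univ.filter (fun i => ¬ 3 ≤ R i) with hRest
    have hsplit2 : ∑ i ∈ Rest.filter (fun i => R i = 1), R i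
        + ∑ i ∈ Rest.filter (fun i => ¬ R i = 1), R i = ∑ i ∈ Rest, R i :=
      sum_filter_add_sum_filter_not Rest _ R
    have e1 : Rest.filter (fun i => R i = 1) = univ.filter fun i => R i = 1 := by
      ext i
      simp only [hRest, mem_filter, filter_filter, mem_univ, true_and]
      omega
    have s1 : ∑ i ∈ univ.filter (fun i => R i = 1), R i = a := by
      rw [Finset.sum_congr rfl (fun i hi => (mem_filter.1 hi).2), sum_const, smul_eq_mul, mul_one]
    have s2 : 2 * (Rest.filter (fun i => ¬ R i = 1)).card
        ≤ ∑ i ∈ Rest.filter (fun i => ¬ R i = 1), R i := by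
      have := Finset.card_nsmul_le_sum (Rest.filter (fun i => ¬ R i = 1)) R 2 ?_
      · simpa [mul_comm] using this
      · intro i hi
        simp only [hRest, mem_filter, mem_univ, true_and] at hi
        have := hpos i
        omega
    have c1 : k + Rest.card = Fintype.card I := by
      rw [← card_univ (α := I)]
      exact card_filter_add_card_filter_not _
    have c2 : (Rest.filter fun i => R i = 1).card + (Rest.filter fun i => ¬ R i = 1).card
        = Rest.card := card_filter_add_card_filter_not _
    rw [e1] at hsplit2 c2
    omega
  · have cardY : (F.filter fun u => 3 ≤ R u.1).card = Y := by
      rw [Finset.card_eq_sum_card_fiberwise (f := Prod.fst)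
        (t := univ.filter fun i => 3 ≤ R i) ?_]
      · refine Finset.sum_congr rfl fun i hi => ?_
        rw [hR]
        congr 1
        ext u
        simp only [mem_filter, filter_filter]
        constructor
        · rintro ⟨h1, _, h3⟩; exact ⟨h1, h3⟩
        · rintro ⟨h1, h3⟩
          exact ⟨h1, by rw [h3]; exact (mem_filter.1 hi).2, h3⟩
      · intro u hu
        exact mem_filter.2 ⟨mem_univ _, (mem_filter.1 hu).2⟩
    rcases (univ.filter fun j => C j = 1).eq_empty_or_nonempty with he | ⟨j0, hj0⟩
    · rw [he]; simp
    · have hne0 : (F.filter fun u => u.2 = j0).Nonempty := by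
        rw [← card_pos, ← hC, (mem_filter.1 hj0).2]
        norm_num
      obtain ⟨v0, hv0⟩ := hne0
      set g : J → I × J := fun j =>
        if h : (F.filter fun u => u.2 = j).Nonempty then h.choose else v0 with hg
      rw [← cardY]
      apply Finset.card_le_card_of_injOn g
      · intro j hj
        have hCj : C j = 1 := (mem_filter.1 hj).2
        have hne : (F.filter fun u => u.2 = j).Nonempty := by
          rw [← card_pos, ← hC, hCj]; norm_num
        have hgj : g j = hne.choose := by rw [hg]; exact dif_pos hne
        have hspec := hne.choose_spec
        rw [mem_filter] at hspec
        have h4 := key4 _ hspec.1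
        rw [hspec.2, hCj] at h4
        rw [hgj]; apply Finset.mem_coe.2; rw [mem_filter]
        exact ⟨hspec.1, by omega⟩
      · intro j1 h1 j2 h2 heq
        have e1 : (g j1).2 = j1 := by
          have hne : (F.filter fun u => u.2 = j1).Nonempty := by
            rw [← card_pos, ← hC, (mem_filter.1 h1).2]; norm_num
          rw [hg]; simp only [dif_pos hne]
          exact (mem_filter.1 hne.choose_spec).2
        have e2 : (g j2).2 = j2 := by
          have hne : (F.filter fun u => u.2 = j2).Nonempty := by
            rw [← card_pos, ← hC, (mem_filter.1 h2).2]; norm_num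
          rw [hg]; simp only [dif_pos hne]
          exact (mem_filter.1 hne.choose_spec).2
        rw [← e1, ← e2, heq]

lemma lower {n : ℕ} (hn : 4 ≤ n) (S : Set (Fin n × Fin (n + 2)))
    (hS : TotalTwoDom (K n □ K (n + 2)) S) :
    3 * n + 3 ≤ 2 * S.ncard ∧ (n % 4 = 3 → 3 * n + 5 ≤ 2 * S.ncard) := by
  classical
  have hfin : S.Finite := Set.toFinite S
  set F := hfin.toFinset with hFdef
  have hmem : ∀ u, u ∈ F ↔ u ∈ S := fun u => Set.Finite.mem_toFinset _
  have hcard : S.ncard = F.card := Set.ncard_eq_toFinset_card S hfin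
  set R : Fin n → ℕ := fun i => (F.filter fun u => u.1 = i).card with hRdef
  set C : Fin (n + 2) → ℕ := fun j => (F.filter fun u => u.2 = j).card with hCdef
  have key : ∀ v : Fin n × Fin (n + 2),
      2 + (if v ∈ F then 2 else 0) ≤ R v.1 + C v.2 := by
    intro v
    have h2 := hS v
    have e : S ∩ {u | (K n □ K (n + 2)).Adj v u}
        = ↑(F.filter fun u => u ≠ v ∧ (u.1 = v.1 ∨ u.2 = v.2)) := by
      ext u
      simp only [Set.mem_inter_iff, Set.mem_setOf_eq, Finset.coe_filter, hmem, adj_iff]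
    rw [e, Set.ncard_coe_finset] at h2
    have hcid := count_id F v
    have eR : R v.1 = (F.filter fun u => u.1 = v.1).card := rfl
    have eC : C v.2 = (F.filter fun u => u.2 = v.2).card := rfl
    omega
  have key4 : ∀ v ∈ F, 4 ≤ R v.1 + C v.2 := by
    intro v hv
    have := key v
    rw [if_pos hv] at this
    omega
  have hsumR : F.card = ∑ i, R i :=
    Finset.card_eq_sum_card_fiberwise (f := Prod.fst) (t := univ) fun u _ => mem_univ u.1
  have hsumC : F.card = ∑ j, C j :=
    Finset.card_eq_sum_card_fiberwise (f := Prod.snd) (t := univ) fun u _ => mem_univ u.2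
  by_cases hrow : ∃ i, R i = 0
  · -- degenerate: an empty row forces every column to have ≥ 2
    obtain ⟨i, hi⟩ := hrow
    have hc2 : ∀ j, 2 ≤ C j := by
      intro j
      have hk := key (i, j)
      have hv : (i, j) ∉ F := by
        intro h
        have : (i, j) ∈ F.filter fun u => u.1 = i := mem_filter.2 ⟨h, rfl⟩
        have : 0 < R i := card_pos.2 ⟨_, this⟩
        omega
      rw [if_neg hv] at hk
      simpa [hi] using hk
    have hb : (univ : Finset (Fin (n + 2))).card * 2 ≤ ∑ j, C j := by
      have := Finset.card_nsmul_le_sum (univ : Finset (Fin (n + 2))) C 2 fun j _ => hc2 j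
      simpa using this
    rw [card_univ, Fintype.card_fin] at hb
    rw [hcard]
    omega
  by_cases hcol : ∃ j, C j = 0
  · obtain ⟨j, hj⟩ := hcol
    have hr2 : ∀ i, 2 ≤ R i := by
      intro i
      have hk := key (i, j)
      have hv : (i, j) ∉ F := by
        intro h
        have : (i, j) ∈ F.filter fun u => u.2 = j := mem_filter.2 ⟨h, rfl⟩
        have : 0 < C j := card_pos.2 ⟨_, this⟩
        omega
      rw [if_neg hv] at hk
      simpa [hj] using hk
    have hb : (univ : Finset (Fin n)).card * 2 ≤ ∑ i, R i := by
      have := Finset.card_nsmul_le_sum (univ : Finset (Fin n)) R 2 fun i _ => hr2 i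
      simpa using this
    rw [card_univ, Fintype.card_fin] at hb
    rw [hcard]
    omega
  push_neg at hrow hcol
  have hRpos : ∀ i, 1 ≤ R i := fun i => Nat.one_le_iff_ne_zero.2 (hrow i)
  have hCpos : ∀ j, 1 ≤ C j := fun j => Nat.one_le_iff_ne_zero.2 (hcol j)
  obtain ⟨k, Y, hkY, hak, hYs, hqY⟩ :=
    side F R C (fun i => rfl) (fun j => rfl) hRpos key4
  -- swapped side
  set F2 := F.image Prod.swap with hF2
  have hF2card : F2.card = F.card := card_image_of_injective _ Prod.swap_injective
  have hmem2 : ∀ u : Fin (n + 2) × Fin n, u ∈ F2 ↔ u.swap ∈ F := by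
    intro u
    simp only [hF2, mem_image]
    constructor
    · rintro ⟨w, hw, rfl⟩; simpa using hw
    · intro h; exact ⟨u.swap, h, Prod.swap_swap u⟩
  have hC2 : ∀ j, C j = (F2.filter fun u => u.1 = j).card := by
    intro j
    have : F2.filter (fun u => u.1 = j) = (F.filter fun u => u.2 = j).image Prod.swap := by
      ext u
      simp only [mem_filter, mem_image, hmem2]
      constructor
      · rintro ⟨h1, h2⟩
        exact ⟨u.swap, ⟨h1, by simpa using h2⟩, Prod.swap_swap u⟩
      · rintro ⟨w, ⟨hw1, hw2⟩, rfl⟩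
        exact ⟨by simpa using hw1, hw2⟩
    rw [this, card_image_of_injective _ Prod.swap_injective]
  have hR2 : ∀ i, R i = (F2.filter fun u => u.2 = i).card := by
    intro i
    have : F2.filter (fun u => u.2 = i) = (F.filter fun u => u.1 = i).image Prod.swap := by
      ext u
      simp only [mem_filter, mem_image, hmem2]
      constructor
      · rintro ⟨h1, h2⟩
        exact ⟨u.swap, ⟨h1, by simpa using h2⟩, Prod.swap_swap u⟩
      · rintro ⟨w, ⟨hw1, hw2⟩, rfl⟩
        exact ⟨by simpa using hw1, hw2⟩
    rw [this, card_image_of_injective _ Prod.swap_injective]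
  have key4' : ∀ v ∈ F2, 4 ≤ C v.1 + R v.2 := by
    intro v hv
    have := key4 v.swap ((hmem2 v).1 hv)
    simpa [Nat.add_comm] using this
  obtain ⟨p, X, hpX, hqp, hXs, haX⟩ :=
    side F2 C R hC2 hR2 hCpos key4'
  rw [hF2card] at hXs
  simp only [Fintype.card_fin] at hak hYs hqp hXs
  rw [hcard]
  omega

lemma tdt_of {N M : ℕ} (S : Set (Fin N × Fin M))
    (H1 : ∀ i, ∃ v ∈ S, v.1 = i) (H2 : ∀ j, ∃ v ∈ S, v.2 = j)
    (H3 : ∀ v ∈ S, ∃ x ∈ S, ∃ y ∈ S, x ≠ y ∧ x ≠ v ∧ y ≠ v ∧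
        ((x.1 = v.1 ∧ y.1 = v.1) ∨ (x.2 = v.2 ∧ y.2 = v.2))) :
    TotalTwoDom (K N □ K M) S := by
  intro v
  have two : ∀ x y : Fin N × Fin M, x ∈ S → y ∈ S → x ≠ y →
      (K N □ K M).Adj v x → (K N □ K M).Adj v y →
      2 ≤ (S ∩ {u | (K N □ K M).Adj v u}).ncard := by
    intro x y hx hy hxy ax ay
    have : 1 < (S ∩ {u | (K N □ K M).Adj v u}).ncard :=
      (Set.one_lt_ncard (Set.toFinite _)).2 ⟨x, ⟨hx, ax⟩, y, ⟨hy, ay⟩, hxy⟩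
    omega
  obtain ⟨w, hw, hw1⟩ := H1 v.1
  obtain ⟨z, hz, hz2⟩ := H2 v.2
  by_cases hwv : w = v
  · obtain ⟨x, hx, y, hy, hxy, hxv, hyv, hline⟩ := H3 v (hwv ▸ hw)
    refine two x y hx hy hxy ?_ ?_ <;> rw [adj_iff]
    · rcases hline with ⟨h1, _⟩ | ⟨h1, _⟩
      · exact ⟨hxv, Or.inl h1⟩
      · exact ⟨hxv, Or.inr h1⟩
    · rcases hline with ⟨_, h2⟩ | ⟨_, h2⟩
      · exact ⟨hyv, Or.inl h2⟩
      · exact ⟨hyv, Or.inr h2⟩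
  by_cases hzv : z = v
  · obtain ⟨x, hx, y, hy, hxy, hxv, hyv, hline⟩ := H3 v (hzv ▸ hz)
    refine two x y hx hy hxy ?_ ?_ <;> rw [adj_iff]
    · rcases hline with ⟨h1, _⟩ | ⟨h1, _⟩
      · exact ⟨hxv, Or.inl h1⟩
      · exact ⟨hxv, Or.inr h1⟩
    · rcases hline with ⟨_, h2⟩ | ⟨_, h2⟩
      · exact ⟨hyv, Or.inl h2⟩
      · exact ⟨hyv, Or.inr h2⟩
  have hwz : w ≠ z := fun h => hwv (Prod.ext hw1 (h ▸ hz2))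
  exact two w z hw hz hwz ((adj_iff v w).2 ⟨hwv, Or.inl hw1⟩)
    ((adj_iff v z).2 ⟨hzv, Or.inr hz2⟩)

lemma build {n s₀ : ℕ} (hn : 4 ≤ n) (ψ : ℕ → ℕ × ℕ)
    (hlt : ∀ t, t < s₀ → (ψ t).1 < n ∧ (ψ t).2 < n + 2)
    (hinj : ∀ t t', t < s₀ → t' < s₀ → ψ t = ψ t' → t = t')
    (H1 : ∀ i, i < n → ∃ t, t < s₀ ∧ (ψ t).1 = i)
    (H2 : ∀ j, j < n + 2 → ∃ t, t < s₀ ∧ (ψ t).2 = j)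
    (H3 : ∀ t, t < s₀ → ∃ t1 t2, t1 < s₀ ∧ t2 < s₀ ∧ ψ t1 ≠ ψ t2 ∧ ψ t1 ≠ ψ t ∧ ψ t2 ≠ ψ t ∧
        (((ψ t1).1 = (ψ t).1 ∧ (ψ t2).1 = (ψ t).1) ∨
         ((ψ t1).2 = (ψ t).2 ∧ (ψ t2).2 = (ψ t).2))) :
    ∃ S : Set (Fin n × Fin (n + 2)),
      TotalTwoDom (K n □ K (n + 2)) S ∧ S.ncard = s₀ := by
  set f : Fin s₀ → Fin n × Fin (n + 2) := fun t =>
    (⟨(ψ t).1, (hlt t t.2).1⟩, ⟨(ψ t).2, (hlt t t.2).2⟩) with hf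
  have hψf : ∀ t : Fin s₀, ((f t).1 : ℕ) = (ψ t).1 ∧ ((f t).2 : ℕ) = (ψ t).2 :=
    fun t => ⟨rfl, rfl⟩
  have hfinj : Function.Injective f := by
    intro t t' h
    have h1 : (ψ (t : ℕ)).1 = (ψ (t' : ℕ)).1 := congrArg (fun x => (x.1 : ℕ)) h
    have h2 : (ψ (t : ℕ)).2 = (ψ (t' : ℕ)).2 := congrArg (fun x => (x.2 : ℕ)) h
    exact Fin.ext (hinj _ _ t.2 t'.2 (Prod.ext h1 h2))
  have hfne : ∀ t t' : Fin s₀, ψ (t : ℕ) ≠ ψ (t' : ℕ) → f t ≠ f t' := by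
    intro t t' hne h
    exact hne (Prod.ext (congrArg (fun x => (x.1 : ℕ)) h) (congrArg (fun x => (x.2 : ℕ)) h))
  refine ⟨Set.range f, ?_, ?_⟩
  · apply tdt_of
    · intro i
      obtain ⟨t, ht, hti⟩ := H1 i i.2
      exact ⟨f ⟨t, ht⟩, Set.mem_range_self _, Fin.ext hti⟩
    · intro j
      obtain ⟨t, ht, htj⟩ := H2 j j.2
      exact ⟨f ⟨t, ht⟩, Set.mem_range_self _, Fin.ext htj⟩
    · rintro v ⟨t, rfl⟩
      obtain ⟨t1, t2, h1, h2, hne12, hne1, hne2, hline⟩ := H3 t t.2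
      refine ⟨f ⟨t1, h1⟩, Set.mem_range_self _, f ⟨t2, h2⟩, Set.mem_range_self _,
        hfne _ _ hne12, hfne _ _ hne1, hfne _ _ hne2, ?_⟩
      rcases hline with ⟨e1, e2⟩ | ⟨e1, e2⟩
      · exact Or.inl ⟨Fin.ext e1, Fin.ext e2⟩
      · exact Or.inr ⟨Fin.ext e1, Fin.ext e2⟩
  · rw [← Set.image_univ, Set.ncard_image_of_injective _ hfinj, Set.ncard_univ,
      Nat.card_eq_fintype_card, Fintype.card_fin]

lemma upper0 {n : ℕ} (hn : 4 ≤ n) (h4 : n % 4 = 0) :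
    ∃ S : Set (Fin n × Fin (n + 2)),
      TotalTwoDom (K n □ K (n + 2)) S ∧ 2 * S.ncard = 3 * n + 4 := by
  set m := n / 4 with hmdef
  have hm : n = 4 * m := by omega
  have hm1 : 1 ≤ m := by omega
  set ψ : ℕ → ℕ × ℕ := fun t =>
    if t < 3 * m then (t, t / 3)
    else (3 * m + (if t - 3 * m < 3 * (m - 1) then (t - 3 * m) / 3 else m - 1),
      m + (t - 3 * m)) with hψ
  have A1 : ∀ t, t < 6 * m + 2 → (ψ t).1 < n ∧ (ψ t).2 < n + 2 := by
    intro t ht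
    simp only [hψ]
    split_ifs with h <;> constructor <;> simp only [] <;> omega
  have A2 : ∀ t t', t < 6 * m + 2 → t' < 6 * m + 2 → ψ t = ψ t' → t = t' := by
    intro t t' ht ht' h
    simp only [hψ] at h
    split_ifs at h <;> rw [Prod.mk.injEq] at h <;> omega
  have A3 : ∀ i, i < n → ∃ t, t < 6 * m + 2 ∧ (ψ t).1 = i := by
    intro i hi
    refine ⟨if i < 3 * m then i else 3 * m + 3 * (i - 3 * m), ?_, ?_⟩
    · split_ifs <;> omega
    · simp only [hψ]
      split_ifs <;> simp only [] <;> omega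
  have A4 : ∀ j, j < n + 2 → ∃ t, t < 6 * m + 2 ∧ (ψ t).2 = j := by
    intro j hj
    refine ⟨if j < m then 3 * j else 3 * m + (j - m), ?_, ?_⟩
    · split_ifs <;> omega
    · simp only [hψ]
      split_ifs <;> simp only [] <;> omega
  have A5 : ∀ t, t < 6 * m + 2 → ∃ t1 t2, t1 < 6 * m + 2 ∧ t2 < 6 * m + 2 ∧
      ψ t1 ≠ ψ t2 ∧ ψ t1 ≠ ψ t ∧ ψ t2 ≠ ψ t ∧
      (((ψ t1).1 = (ψ t).1 ∧ (ψ t2).1 = (ψ t).1) ∨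
       ((ψ t1).2 = (ψ t).2 ∧ (ψ t2).2 = (ψ t).2)) := by
    intro t ht
    by_cases hs : t < 3 * m
    · refine ⟨if t = 3 * (t / 3) then 3 * (t / 3) + 1 else 3 * (t / 3),
        if t = 3 * (t / 3) + 2 then 3 * (t / 3) + 1 else 3 * (t / 3) + 2,
        ?_, ?_, ?_, ?_, ?_, Or.inr ?_⟩ <;>
        (try simp only [hψ]) <;> (try split_ifs) <;>
        (try simp only [Prod.mk.injEq, ne_eq, not_and]) <;> first | exact ⟨trivial, trivial⟩ | omega
    · set L := if t - 3 * m < 3 * (m - 1) then 3 * m + 3 * ((t - 3 * m) / 3)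
        else 3 * m + 3 * (m - 1) with hL
      have hLb : (L = 3 * m + 3 * ((t - 3 * m) / 3) ∧ t - 3 * m < 3 * (m - 1)) ∨
          (L = 3 * m + 3 * (m - 1) ∧ ¬ t - 3 * m < 3 * (m - 1)) := by
        rw [hL]; split_ifs with h
        · exact Or.inl ⟨rfl, h⟩
        · exact Or.inr ⟨rfl, h⟩
      clear_value L
      refine ⟨if t = L then L + 1 else L, if t = L + 2 then L + 1 else L + 2,
        ?_, ?_, ?_, ?_, ?_, Or.inl ?_⟩ <;>
        (try simp only [hψ]) <;> (try split_ifs) <;>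
        (try simp only [Prod.mk.injEq, ne_eq, not_and]) <;> first | exact ⟨trivial, trivial⟩ | omega
  obtain ⟨S, h1, h2⟩ := build hn ψ A1 A2 A3 A4 A5
  exact ⟨S, h1, by omega⟩

lemma upper2 {n : ℕ} (hn : 4 ≤ n) (h4 : n % 4 = 2) :
    ∃ S : Set (Fin n × Fin (n + 2)),
      TotalTwoDom (K n □ K (n + 2)) S ∧ 2 * S.ncard = 3 * n + 4 := by
  set m := n / 4 with hmdef
  have hm : n = 4 * m + 2 := by omega
  have hm1 : 1 ≤ m := by omega
  set ψ : ℕ → ℕ × ℕ := fun t =>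
    if t < 3 * m + 1 then (t, if t < 4 then 0 else 1 + (t - 4) / 3)
    else (3 * m + 1 + (if t - (3 * m + 1) < 3 * m then (t - (3 * m + 1)) / 3 else m),
      m + (t - (3 * m + 1))) with hψ
  have A1 : ∀ t, t < 6 * m + 5 → (ψ t).1 < n ∧ (ψ t).2 < n + 2 := by
    intro t ht
    simp only [hψ]
    split_ifs with h <;> constructor <;> simp only [] <;> omega
  have A2 : ∀ t t', t < 6 * m + 5 → t' < 6 * m + 5 → ψ t = ψ t' → t = t' := by
    intro t t' ht ht' h
    simp only [hψ] at h
    split_ifs at h <;> rw [Prod.mk.injEq] at h <;> omega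
  have A3 : ∀ i, i < n → ∃ t, t < 6 * m + 5 ∧ (ψ t).1 = i := by
    intro i hi
    refine ⟨if i < 3 * m + 1 then i else 3 * m + 1 + 3 * (i - (3 * m + 1)), ?_, ?_⟩
    · split_ifs <;> omega
    · simp only [hψ]
      split_ifs <;> simp only [] <;> omega
  have A4 : ∀ j, j < n + 2 → ∃ t, t < 6 * m + 5 ∧ (ψ t).2 = j := by
    intro j hj
    refine ⟨if j < m then (if j = 0 then 0 else 4 + 3 * (j - 1))
      else 3 * m + 1 + (j - m), ?_, ?_⟩
    · split_ifs <;> omega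
    · simp only [hψ]
      split_ifs <;> simp only [] <;> omega
  have A5 : ∀ t, t < 6 * m + 5 → ∃ t1 t2, t1 < 6 * m + 5 ∧ t2 < 6 * m + 5 ∧
      ψ t1 ≠ ψ t2 ∧ ψ t1 ≠ ψ t ∧ ψ t2 ≠ ψ t ∧
      (((ψ t1).1 = (ψ t).1 ∧ (ψ t2).1 = (ψ t).1) ∨
       ((ψ t1).2 = (ψ t).2 ∧ (ψ t2).2 = (ψ t).2)) := by
    intro t ht
    by_cases hs : t < 3 * m + 1
    · set L := if t < 4 then 0 else 4 + 3 * ((t - 4) / 3) with hL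
      have hLb : (L = 0 ∧ t < 4) ∨ (L = 4 + 3 * ((t - 4) / 3) ∧ ¬ t < 4) := by
        rw [hL]; split_ifs with h
        · exact Or.inl ⟨rfl, h⟩
        · exact Or.inr ⟨rfl, h⟩
      clear_value L
      refine ⟨if t = L then L + 1 else L, if t = L + 2 then L + 1 else L + 2,
        ?_, ?_, ?_, ?_, ?_, Or.inr ?_⟩ <;>
        (try simp only [hψ]) <;> (try split_ifs) <;>
        (try simp only [Prod.mk.injEq, ne_eq, not_and]) <;> first | exact ⟨trivial, trivial⟩ | omega
    · set L := if t - (3 * m + 1) < 3 * m then 3 * m + 1 + 3 * ((t - (3 * m + 1)) / 3)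
        else 3 * m + 1 + 3 * m with hL
      have hLb : (L = 3 * m + 1 + 3 * ((t - (3 * m + 1)) / 3) ∧ t - (3 * m + 1) < 3 * m) ∨
          (L = 3 * m + 1 + 3 * m ∧ ¬ t - (3 * m + 1) < 3 * m) := by
        rw [hL]; split_ifs with h
        · exact Or.inl ⟨rfl, h⟩
        · exact Or.inr ⟨rfl, h⟩
      clear_value L
      refine ⟨if t = L then L + 1 else L, if t = L + 2 then L + 1 else L + 2,
        ?_, ?_, ?_, ?_, ?_, Or.inl ?_⟩ <;>
        (try simp only [hψ]) <;> (try split_ifs) <;>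
        (try simp only [Prod.mk.injEq, ne_eq, not_and]) <;> first | exact ⟨trivial, trivial⟩ | omega
  obtain ⟨S, h1, h2⟩ := build hn ψ A1 A2 A3 A4 A5
  exact ⟨S, h1, by omega⟩

lemma upper3 {n : ℕ} (hn : 4 ≤ n) (h4 : n % 4 = 3) :
    ∃ S : Set (Fin n × Fin (n + 2)),
      TotalTwoDom (K n □ K (n + 2)) S ∧ 2 * S.ncard = 3 * n + 5 := by
  set m := n / 4 with hmdef
  have hm : n = 4 * m + 3 := by omega
  have hm1 : 1 ≤ m := by omega
  set ψ : ℕ → ℕ × ℕ := fun t =>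
    if t < 3 * m + 3 then (t, t / 3)
    else (3 * m + 3 + (if t - (3 * m + 3) < 3 * (m - 1) then (t - (3 * m + 3)) / 3 else m - 1),
      m + 1 + (t - (3 * m + 3))) with hψ
  have A1 : ∀ t, t < 6 * m + 7 → (ψ t).1 < n ∧ (ψ t).2 < n + 2 := by
    intro t ht
    simp only [hψ]
    split_ifs with h <;> constructor <;> simp only [] <;> omega
  have A2 : ∀ t t', t < 6 * m + 7 → t' < 6 * m + 7 → ψ t = ψ t' → t = t' := by
    intro t t' ht ht' h
    simp only [hψ] at h
    split_ifs at h <;> rw [Prod.mk.injEq] at h <;> omega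
  have A3 : ∀ i, i < n → ∃ t, t < 6 * m + 7 ∧ (ψ t).1 = i := by
    intro i hi
    refine ⟨if i < 3 * m + 3 then i else 3 * m + 3 + 3 * (i - (3 * m + 3)), ?_, ?_⟩
    · split_ifs <;> omega
    · simp only [hψ]
      split_ifs <;> simp only [] <;> omega
  have A4 : ∀ j, j < n + 2 → ∃ t, t < 6 * m + 7 ∧ (ψ t).2 = j := by
    intro j hj
    refine ⟨if j < m + 1 then 3 * j else 3 * m + 3 + (j - (m + 1)), ?_, ?_⟩
    · split_ifs <;> omega
    · simp only [hψ]
      split_ifs <;> simp only [] <;> omega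
  have A5 : ∀ t, t < 6 * m + 7 → ∃ t1 t2, t1 < 6 * m + 7 ∧ t2 < 6 * m + 7 ∧
      ψ t1 ≠ ψ t2 ∧ ψ t1 ≠ ψ t ∧ ψ t2 ≠ ψ t ∧
      (((ψ t1).1 = (ψ t).1 ∧ (ψ t2).1 = (ψ t).1) ∨
       ((ψ t1).2 = (ψ t).2 ∧ (ψ t2).2 = (ψ t).2)) := by
    intro t ht
    by_cases hs : t < 3 * m + 3
    · refine ⟨if t = 3 * (t / 3) then 3 * (t / 3) + 1 else 3 * (t / 3),
        if t = 3 * (t / 3) + 2 then 3 * (t / 3) + 1 else 3 * (t / 3) + 2,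
        ?_, ?_, ?_, ?_, ?_, Or.inr ?_⟩ <;>
        (try simp only [hψ]) <;> (try split_ifs) <;>
        (try simp only [Prod.mk.injEq, ne_eq, not_and]) <;> first | exact ⟨trivial, trivial⟩ | omega
    · set L := if t - (3 * m + 3) < 3 * (m - 1) then 3 * m + 3 + 3 * ((t - (3 * m + 3)) / 3)
        else 3 * m + 3 + 3 * (m - 1) with hL
      have hLb : (L = 3 * m + 3 + 3 * ((t - (3 * m + 3)) / 3) ∧ t - (3 * m + 3) < 3 * (m - 1)) ∨
          (L = 3 * m + 3 + 3 * (m - 1) ∧ ¬ t - (3 * m + 3) < 3 * (m - 1)) := by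
        rw [hL]; split_ifs with h
        · exact Or.inl ⟨rfl, h⟩
        · exact Or.inr ⟨rfl, h⟩
      clear_value L
      refine ⟨if t = L then L + 1 else L, if t = L + 2 then L + 1 else L + 2,
        ?_, ?_, ?_, ?_, ?_, Or.inl ?_⟩ <;>
        (try simp only [hψ]) <;> (try split_ifs) <;>
        (try simp only [Prod.mk.injEq, ne_eq, not_and]) <;> first | exact ⟨trivial, trivial⟩ | omega
  obtain ⟨S, h1, h2⟩ := build hn ψ A1 A2 A3 A4 A5
  exact ⟨S, h1, by omega⟩

lemma upper1 {n : ℕ} (hn : 4 ≤ n) (h4 : n % 4 = 1) :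
    ∃ S : Set (Fin n × Fin (n + 2)),
      TotalTwoDom (K n □ K (n + 2)) S ∧ 2 * S.ncard = 3 * n + 3 := by
  set m := n / 4 with hmdef
  have hm : n = 4 * m + 1 := by omega
  have hm1 : 1 ≤ m := by omega
  set ψ : ℕ → ℕ × ℕ := fun t =>
    if t < 3 * m then (t, t / 3) else (3 * m + (t - 3 * m) / 3, m + (t - 3 * m)) with hψ
  have A1 : ∀ t, t < 6 * m + 3 → (ψ t).1 < n ∧ (ψ t).2 < n + 2 := by
    intro t ht
    simp only [hψ]
    split_ifs with h <;> constructor <;> simp only [] <;> omega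
  have A2 : ∀ t t', t < 6 * m + 3 → t' < 6 * m + 3 → ψ t = ψ t' → t = t' := by
    intro t t' ht ht' h
    simp only [hψ] at h
    split_ifs at h <;> rw [Prod.mk.injEq] at h <;> omega
  have A3 : ∀ i, i < n → ∃ t, t < 6 * m + 3 ∧ (ψ t).1 = i := by
    intro i hi
    refine ⟨if i < 3 * m then i else 3 * m + 3 * (i - 3 * m), ?_, ?_⟩
    · split_ifs <;> omega
    · simp only [hψ]
      split_ifs <;> simp only [] <;> omega
  have A4 : ∀ j, j < n + 2 → ∃ t, t < 6 * m + 3 ∧ (ψ t).2 = j := by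
    intro j hj
    refine ⟨if j < m then 3 * j else 3 * m + (j - m), ?_, ?_⟩
    · split_ifs <;> omega
    · simp only [hψ]
      split_ifs <;> simp only [] <;> omega
  have A5 : ∀ t, t < 6 * m + 3 → ∃ t1 t2, t1 < 6 * m + 3 ∧ t2 < 6 * m + 3 ∧
      ψ t1 ≠ ψ t2 ∧ ψ t1 ≠ ψ t ∧ ψ t2 ≠ ψ t ∧
      (((ψ t1).1 = (ψ t).1 ∧ (ψ t2).1 = (ψ t).1) ∨
       ((ψ t1).2 = (ψ t).2 ∧ (ψ t2).2 = (ψ t).2)) := by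
    intro t ht
    by_cases hs : t < 3 * m
    · refine ⟨if t = 3 * (t / 3) then 3 * (t / 3) + 1 else 3 * (t / 3),
        if t = 3 * (t / 3) + 2 then 3 * (t / 3) + 1 else 3 * (t / 3) + 2,
        ?_, ?_, ?_, ?_, ?_, Or.inr ?_⟩ <;>
        (try simp only [hψ]) <;> (try split_ifs) <;> (try simp only [Prod.mk.injEq, ne_eq, not_and]) <;> omega
    · refine ⟨if t = 3 * m + 3 * ((t - 3 * m) / 3) then 3 * m + 3 * ((t - 3 * m) / 3) + 1
          else 3 * m + 3 * ((t - 3 * m) / 3),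
        if t = 3 * m + 3 * ((t - 3 * m) / 3) + 2 then 3 * m + 3 * ((t - 3 * m) / 3) + 1
          else 3 * m + 3 * ((t - 3 * m) / 3) + 2,
        ?_, ?_, ?_, ?_, ?_, Or.inl ?_⟩ <;>
        (try simp only [hψ]) <;> (try split_ifs) <;> (try simp only [Prod.mk.injEq, ne_eq, not_and]) <;> omega
  obtain ⟨S, h1, h2⟩ := build hn ψ A1 A2 A3 A4 A5
  exact ⟨S, h1, by omega⟩


theorem stmt_19 (n : ℕ) (hn : 4 ≤ n) :
    (n % 2 = 0 → 2 * gamma2t (K n □ K (n + 2)) = 3 * n + 4) ∧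
    (n % 4 = 1 → 2 * gamma2t (K n □ K (n + 2)) = 3 * n + 3) ∧
    (n % 4 = 3 → 2 * gamma2t (K n □ K (n + 2)) = 3 * n + 5) := by
  have hγ : gamma2t (K n □ K (n + 2))
      = sInf {k | ∃ S : Set (Fin n × Fin (n + 2)),
          TotalTwoDom (K n □ K (n + 2)) S ∧ S.ncard = k} := rfl
  have main : ∀ b : ℕ, (∃ S : Set (Fin n × Fin (n + 2)),
      TotalTwoDom (K n □ K (n + 2)) S ∧ 2 * S.ncard = b) →
      2 * gamma2t (K n □ K (n + 2)) ≤ b ∧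
      3 * n + 3 ≤ 2 * gamma2t (K n □ K (n + 2)) ∧
      (n % 4 = 3 → 3 * n + 5 ≤ 2 * gamma2t (K n □ K (n + 2))) := by
    intro b ⟨S₀, hd, hc⟩
    have hub : gamma2t (K n □ K (n + 2)) ≤ S₀.ncard := by
      rw [hγ]; exact Nat.sInf_le ⟨S₀, hd, rfl⟩
    have hne : {k | ∃ S : Set (Fin n × Fin (n + 2)),
        TotalTwoDom (K n □ K (n + 2)) S ∧ S.ncard = k}.Nonempty :=
      ⟨S₀.ncard, S₀, hd, rfl⟩
    obtain ⟨S₁, hd₁, hc₁⟩ := hγ ▸ Nat.sInf_mem hne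
    have hlow := lower hn S₁ hd₁
    rw [hc₁] at hlow
    omega
  refine ⟨?_, ?_, ?_⟩
  · intro h2
    rcases Nat.even_or_odd (n / 2) with he | ho
    · have h4 : n % 4 = 0 := by rcases he with ⟨c, hc⟩; omega
      obtain ⟨hu, hl, _⟩ := main _ (upper0 hn h4)
      omega
    · have h4 : n % 4 = 2 := by rcases ho with ⟨c, hc⟩; omega
      obtain ⟨hu, hl, _⟩ := main _ (upper2 hn h4)
      omega
  · intro h4
    obtain ⟨hu, hl, _⟩ := main _ (upper1 hn h4)
    omega
  · intro h4
    obtain ⟨hu, _, hl⟩ := main _ (upper3 hn h4)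
    omega
end
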